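/- arXiv:2011.06064 — 6 statements merged into one kernel-verified Lean document; each statement's English description precedes it below -/
import Mathlib

section
/- Let f be the Rastrigin function on ℝⁿ with parameters a_j, ξ_j > 0. Then for every θ ∈ ℝⁿ and σ > 0, the expectation of f under N(θ, σ²I) equals nσ² + ‖θ‖² − Σ_{j=1}^n a_j cos(ξ_j θ_j) exp(−(1/2)σ² ξ_j²). -/
open MeasureTheory Real
open scoped BigOperators

namespace RastriginAux
open Set


lemma integral_even {f : ℝ → ℝ} (hf : ∀ x, f (-x) = f x) :
    ∫ x, f x = 2 * ∫ x in Ioi (0:ℝ), f x := by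
  rw [← integral_comp_abs (f := f)]
  congr 1
  ext x
  rcases abs_choice x with h | h
  · rw [h]
  · rw [h, hf]

lemma integral_odd {f : ℝ → ℝ} (hf : ∀ x, f (-x) = - f x) :
    ∫ x, f x = 0 := by
  have h := integral_neg_eq_self f (volume : Measure ℝ)
  simp_rw [hf, integral_neg] at h
  linarith

lemma integral_sq_mul_gaussian {b : ℝ} (hb : 0 < b) :
    ∫ x : ℝ, x ^ 2 * rexp (-b * x ^ 2) = Real.sqrt (π / b) / (2 * b) := by
  rw [integral_even (fun x => by ring_nf)]
  have h1 : ∫ x in Ioi (0:ℝ), x ^ 2 * rexp (-b * x ^ 2)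
      = ∫ x in Ioi (0:ℝ), x ^ (2:ℝ) * rexp (-b * x ^ (2:ℝ)) := by
    refine setIntegral_congr_fun measurableSet_Ioi (fun x hx => ?_)
    rw [← Real.rpow_natCast x 2]
    norm_num
  rw [h1, integral_rpow_mul_exp_neg_mul_rpow two_pos (by norm_num) hb]
  have h2 : ((2:ℝ) + 1) / 2 = 1/2 + 1 := by norm_num
  rw [h2, Real.Gamma_add_one (by norm_num), Real.Gamma_one_half_eq]
  have hb' : b ≠ 0 := ne_of_gt hb
  have h3 : (-(2 + 1) / 2 : ℝ) = (-1) + (-(1/2)) := by norm_num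
  rw [h3, Real.rpow_add hb, Real.rpow_neg_one, Real.rpow_neg hb.le, ← Real.sqrt_eq_rpow,
    Real.sqrt_div Real.pi_pos.le]
  have hsb : Real.sqrt b ≠ 0 := ne_of_gt (Real.sqrt_pos.mpr hb)
  field_simp



lemma integral_cos_mul_gaussian {b : ℝ} (hb : 0 < b) (c : ℝ) :
    ∫ x : ℝ, Real.cos (c * x) * rexp (-b * x ^ 2)
      = Real.sqrt (π / b) * rexp (-c ^ 2 / (4 * b)) := by
  have hb' : (0:ℝ) < ((b:ℂ)).re := by simpa using hb
  have hint : Integrable (fun x : ℝ =>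
      Complex.exp (Complex.I * c * x) * Complex.exp (-(b:ℂ) * x ^ 2)) := by
    have h := integrable_cexp_quadratic (b := (b:ℂ)) hb' (Complex.I * c) 0
    refine h.congr (Filter.Eventually.of_forall fun x => ?_)
    show Complex.exp (-(b:ℂ) * x ^ 2 + Complex.I * c * x + 0) = _
    rw [add_zero, Complex.exp_add, mul_comm]
  have H := fourierIntegral_gaussian (b := (b:ℂ)) hb' (c : ℂ)
  have hre : ∫ x : ℝ, Real.cos (c * x) * rexp (-b * x ^ 2)
      = (∫ x : ℝ, Complex.exp (Complex.I * c * x) * Complex.exp (-(b:ℂ) * x ^ 2)).re := by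
    rw [← RCLike.re_eq_complex_re, ← integral_re hint]
    congr 1; ext x
    rw [RCLike.re_eq_complex_re, ← Complex.exp_add, Complex.exp_re]
    simp only [← Complex.ofReal_pow, Complex.add_re, Complex.add_im, Complex.mul_re,
      Complex.mul_im, Complex.I_re, Complex.I_im, Complex.ofReal_re, Complex.ofReal_im,
      Complex.neg_re, Complex.neg_im]
    ring_nf
  rw [hre, H]
  have h1 : ((π:ℂ)/(b:ℂ)) = ((π/b : ℝ) : ℂ) := by push_cast; ring
  have h2 : (-(c:ℂ) ^ 2 / (4 * (b:ℂ))) = ((-c ^ 2 / (4 * b) : ℝ) : ℂ) := by push_cast; ring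
  have h3 : ((1:ℂ)/2) = ((1/2 : ℝ) : ℂ) := by norm_num
  rw [h1, h2, h3, ← Complex.ofReal_cpow (by positivity), ← Complex.ofReal_exp,
    ← Complex.ofReal_mul, Complex.ofReal_re, Real.sqrt_eq_rpow]



variable {σ m : ℝ}

/-- The 1D Gaussian density (with our normalization). -/
noncomputable def g (σ m : ℝ) (t : ℝ) : ℝ :=
  (2 * π * σ ^ 2) ^ (-(1:ℝ)/2) * rexp (-(t - m) ^ 2 / (2 * σ ^ 2))

lemma g_eq (hσ : 0 < σ) (t : ℝ) :
    g σ m t = (Real.sqrt (2 * π * σ ^ 2))⁻¹ *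
      rexp (-(2 * σ ^ 2)⁻¹ * (t - m) ^ 2) := by
  have h1 : (2 * π * σ ^ 2) ^ (-(1:ℝ)/2) = (Real.sqrt (2 * π * σ ^ 2))⁻¹ := by
    rw [Real.sqrt_eq_rpow, ← Real.rpow_neg (by positivity)]
    norm_num
  have h2 : -(t - m) ^ 2 / (2 * σ ^ 2) = -(2 * σ ^ 2)⁻¹ * (t - m) ^ 2 := by
    field_simp
  rw [g, h1, h2]

lemma key_const (hσ : 0 < σ) :
    Real.sqrt (π / (2 * σ ^ 2)⁻¹) = Real.sqrt (2 * π * σ ^ 2) := by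
  congr 1
  field_simp

lemma sqrt_ne (hσ : 0 < σ) : Real.sqrt (2 * π * σ ^ 2) ≠ 0 :=
  ne_of_gt (Real.sqrt_pos.mpr (by positivity))

lemma integrable_g (hσ : 0 < σ) : Integrable (g σ m) := by
  have hb : (0:ℝ) < (2 * σ ^ 2)⁻¹ := by positivity
  have h0 := (integrable_exp_neg_mul_sq hb).comp_sub_right m
  have := h0.const_mul ((Real.sqrt (2 * π * σ ^ 2))⁻¹)
  refine this.congr (Filter.Eventually.of_forall fun t => ?_)
  rw [g_eq hσ]

lemma integral_g (hσ : 0 < σ) : ∫ t, g σ m t = 1 := by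
  have hb : (0:ℝ) < (2 * σ ^ 2)⁻¹ := by positivity
  simp_rw [g_eq hσ]
  rw [integral_const_mul]
  have hshift : ∫ t : ℝ, rexp (-(2 * σ ^ 2)⁻¹ * (t - m) ^ 2)
      = ∫ t : ℝ, rexp (-(2 * σ ^ 2)⁻¹ * t ^ 2) := by
    have := integral_add_right_eq_self (μ := (volume : Measure ℝ))
      (fun t : ℝ => rexp (-(2 * σ ^ 2)⁻¹ * t ^ 2)) (-m)
    rw [← this]
    simp [sub_eq_add_neg]
  rw [hshift, integral_gaussian, key_const hσ, inv_mul_cancel₀ (sqrt_ne hσ)]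

lemma integrable_sq_g (hσ : 0 < σ) : Integrable (fun t => t ^ 2 * g σ m t) := by
  have hb : (0:ℝ) < (2 * σ ^ 2)⁻¹ := by positivity
  have h2 : Integrable (fun x : ℝ => x ^ 2 * rexp (-(2 * σ ^ 2)⁻¹ * x ^ 2)) := by
    have := integrable_rpow_mul_exp_neg_mul_sq hb (s := 2) (by norm_num)
    refine this.congr (Filter.Eventually.of_forall fun x => ?_)
    have hx : x ^ (2:ℝ) = x ^ (2:ℕ) := by
      rw [← Real.rpow_natCast x 2]; norm_num
    simp only [hx]
  have h1 : Integrable (fun x : ℝ => x * rexp (-(2 * σ ^ 2)⁻¹ * x ^ 2)) :=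
    integrable_mul_exp_neg_mul_sq hb
  have h0 : Integrable (fun x : ℝ => rexp (-(2 * σ ^ 2)⁻¹ * x ^ 2)) :=
    integrable_exp_neg_mul_sq hb
  have hF : Integrable (fun u : ℝ =>
      (u + m) ^ 2 * ((Real.sqrt (2 * π * σ ^ 2))⁻¹ * rexp (-(2 * σ ^ 2)⁻¹ * u ^ 2))) := by
    have := ((h2.add ((h1.const_mul (2*m)))).add (h0.const_mul (m^2))).const_mul
      ((Real.sqrt (2 * π * σ ^ 2))⁻¹)
    refine this.congr (Filter.Eventually.of_forall fun u => ?_)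
    simp only [Pi.add_apply]
    ring
  have := hF.comp_sub_right m
  refine this.congr (Filter.Eventually.of_forall fun t => ?_)
  simp only [sub_add_cancel]
  rw [g_eq hσ]

lemma integrable_cos_g (hσ : 0 < σ) (c : ℝ) :
    Integrable (fun t => Real.cos (c * t) * g σ m t) :=
  (integrable_g hσ (m := m)).bdd_mul (c := 1)
    ((Real.continuous_cos.comp (continuous_const.mul continuous_id)).aestronglyMeasurable)
    (Filter.Eventually.of_forall fun x => by simpa using Real.abs_cos_le_one (c * x))

lemma integral_sq_g (hσ : 0 < σ) : ∫ t, t ^ 2 * g σ m t = σ ^ 2 + m ^ 2 := by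
  have hb : (0:ℝ) < (2 * σ ^ 2)⁻¹ := by positivity
  set b := (2 * σ ^ 2)⁻¹ with hbdef
  set K := (Real.sqrt (2 * π * σ ^ 2))⁻¹ with hK
  have h2 : Integrable (fun x : ℝ => x ^ 2 * rexp (-b * x ^ 2)) := by
    have := integrable_rpow_mul_exp_neg_mul_sq hb (s := 2) (by norm_num)
    refine this.congr (Filter.Eventually.of_forall fun x => ?_)
    have hx : x ^ (2:ℝ) = x ^ (2:ℕ) := by
      rw [← Real.rpow_natCast x 2]; norm_num
    simp only [hx]
  have h1 : Integrable (fun x : ℝ => x * rexp (-b * x ^ 2)) :=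
    integrable_mul_exp_neg_mul_sq hb
  have h0 : Integrable (fun x : ℝ => rexp (-b * x ^ 2)) :=
    integrable_exp_neg_mul_sq hb
  have hshift : ∫ t : ℝ, t ^ 2 * g σ m t
      = ∫ u : ℝ, (u + m) ^ 2 * (K * rexp (-b * u ^ 2)) := by
    rw [← integral_add_right_eq_self (μ := (volume : Measure ℝ))
      (fun u : ℝ => (u + m) ^ 2 * (K * rexp (-b * u ^ 2))) (-m)]
    congr 1; ext t
    rw [g_eq hσ]
    simp only [← sub_eq_add_neg, sub_add_cancel, hK, hbdef]
  rw [hshift]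
  have hexpand : ∀ u : ℝ, (u + m) ^ 2 * (K * rexp (-b * u ^ 2))
      = K * (u ^ 2 * rexp (-b * u ^ 2)) + ((2 * m * K) * (u * rexp (-b * u ^ 2))
        + (m ^ 2 * K) * rexp (-b * u ^ 2)) := by
    intro u; ring
  simp_rw [hexpand]
  have hsum2 : Integrable (fun x : ℝ => 2 * m * K * (x * rexp (-b * x ^ 2))
      + m ^ 2 * K * rexp (-b * x ^ 2)) := (h1.const_mul _).add (h0.const_mul _)
  rw [integral_add (h2.const_mul K) hsum2,
    integral_add (h1.const_mul (2*m*K)) (h0.const_mul (m^2*K)),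
    integral_const_mul, integral_const_mul, integral_const_mul,
    integral_odd (f := fun x : ℝ => x * rexp (-b * x ^ 2)) (fun x => by simp),
    integral_sq_mul_gaussian hb, integral_gaussian, key_const hσ]
  have hs := sqrt_ne hσ
  have hbs : b = (2 * σ ^ 2)⁻¹ := hbdef
  have h2σ : (2 * σ ^ 2) ≠ 0 := by positivity
  have hsq : Real.sqrt (2 * π * σ ^ 2) * (Real.sqrt (2 * π * σ ^ 2))⁻¹ = 1 :=
    mul_inv_cancel₀ hs
  field_simp [hbdef, hK]
  have hb2 : 2 * b * σ ^ 2 = 1 := by rw [hbdef]; field_simp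
  have hK2 : K * Real.sqrt (2 * π * σ ^ 2) = 1 := by rw [hK]; exact inv_mul_cancel₀ hs
  linear_combination (1 + 2 * b * m ^ 2) * hK2 - hb2


lemma integral_cos_g (hσ : 0 < σ) (c : ℝ) :
    ∫ t, Real.cos (c * t) * g σ m t
      = Real.cos (c * m) * rexp (-(1/2) * σ ^ 2 * c ^ 2) := by
  have hb : (0:ℝ) < (2 * σ ^ 2)⁻¹ := by positivity
  set b := (2 * σ ^ 2)⁻¹ with hbdef
  set K := (Real.sqrt (2 * π * σ ^ 2))⁻¹ with hK
  have h0 : Integrable (fun x : ℝ => rexp (-b * x ^ 2)) :=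
    integrable_exp_neg_mul_sq hb
  have hcos : Integrable (fun x : ℝ => Real.cos (c * x) * rexp (-b * x ^ 2)) :=
    h0.bdd_mul (c := 1)
      ((Real.continuous_cos.comp (continuous_const.mul continuous_id)).aestronglyMeasurable)
      (Filter.Eventually.of_forall fun x => by simpa using Real.abs_cos_le_one (c * x))
  have hsin : Integrable (fun x : ℝ => Real.sin (c * x) * rexp (-b * x ^ 2)) :=
    h0.bdd_mul (c := 1)
      ((Real.continuous_sin.comp (continuous_const.mul continuous_id)).aestronglyMeasurable)
      (Filter.Eventually.of_forall fun x => by simpa using Real.abs_sin_le_one (c * x))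
  have hshift : ∫ t : ℝ, Real.cos (c * t) * g σ m t
      = ∫ u : ℝ, Real.cos (c * (u + m)) * (K * rexp (-b * u ^ 2)) := by
    rw [← integral_add_right_eq_self (μ := (volume : Measure ℝ))
      (fun u : ℝ => Real.cos (c * (u + m)) * (K * rexp (-b * u ^ 2))) (-m)]
    congr 1; ext t
    rw [g_eq hσ]
    simp only [← sub_eq_add_neg, sub_add_cancel, hK, hbdef]
  rw [hshift]
  have hexpand : ∀ u : ℝ, Real.cos (c * (u + m)) * (K * rexp (-b * u ^ 2))
      = (Real.cos (c * m) * K) * (Real.cos (c * u) * rexp (-b * u ^ 2))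
        - (Real.sin (c * m) * K) * (Real.sin (c * u) * rexp (-b * u ^ 2)) := by
    intro u
    rw [mul_add, Real.cos_add]
    ring
  simp_rw [hexpand]
  rw [integral_sub (hcos.const_mul _) (hsin.const_mul _), integral_const_mul, integral_const_mul,
    integral_odd (f := fun x : ℝ => Real.sin (c * x) * rexp (-b * x ^ 2))
      (fun x => by simp [mul_comm]),
    integral_cos_mul_gaussian hb c, key_const hσ]
  have hs := sqrt_ne hσ
  have hexp : -c ^ 2 / (4 * b) = -(1/2) * σ ^ 2 * c ^ 2 := by
    rw [hbdef]
    field_simp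
    ring
  rw [hexp, hK]
  field_simp
  ring

lemma integrable_h (hσ : 0 < σ) (A c : ℝ) :
    Integrable (fun t => (t ^ 2 - A * Real.cos (c * t)) * g σ m t) := by
  have h := (integrable_sq_g (m := m) hσ).sub
    (((integrable_cos_g (m := m) hσ c).const_mul A))
  refine h.congr (Filter.Eventually.of_forall fun t => ?_)
  simp only [Pi.sub_apply]
  ring

lemma integral_h (hσ : 0 < σ) (A c : ℝ) :
    ∫ t, (t ^ 2 - A * Real.cos (c * t)) * g σ m t
      = σ ^ 2 + m ^ 2 - A * Real.cos (c * m) * rexp (-(1/2) * σ ^ 2 * c ^ 2) := by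
  have hexpand : ∀ t : ℝ, (t ^ 2 - A * Real.cos (c * t)) * g σ m t
      = t ^ 2 * g σ m t - A * (Real.cos (c * t) * g σ m t) := by intro t; ring
  simp_rw [hexpand]
  rw [integral_sub (integrable_sq_g hσ) ((integrable_cos_g hσ c).const_mul A),
    integral_const_mul, integral_sq_g hσ, integral_cos_g hσ c]
  ring

end RastriginAux

open RastriginAux in
/-- The expectation of the Rastrigin function
`f(x) = ‖x‖² − Σ_j a_j cos(ξ_j x_j)` under the multivariate normal distribution
`N(θ, σ²I)` equals `nσ² + ‖θ‖² − Σ_j a_j cos(ξ_j θ_j) exp(−(1/2)σ²ξ_j²)`. -/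
theorem expectation_rastrigin_gaussian (n : ℕ) (a ξ : Fin n → ℝ)
    (ha : ∀ j, 0 < a j) (hξ : ∀ j, 0 < ξ j)
    (θ : EuclideanSpace ℝ (Fin n)) (σ : ℝ) (hσ : 0 < σ) :
    (∫ x : EuclideanSpace ℝ (Fin n),
        (‖x‖ ^ 2 - ∑ j, a j * Real.cos (ξ j * x j)) *
          ((2 * π * σ ^ 2) ^ (-(n : ℝ) / 2) * Real.exp (-‖x - θ‖ ^ 2 / (2 * σ ^ 2))))
      = n * σ ^ 2 + ‖θ‖ ^ 2
        - ∑ j, a j * Real.cos (ξ j * θ j) * Real.exp (-(1 / 2) * σ ^ 2 * ξ j ^ 2) := by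
  classical
  have h2πσ : (0:ℝ) < 2 * π * σ ^ 2 := by positivity
  have hCn : (2 * π * σ ^ 2) ^ (-(n : ℝ) / 2)
      = ((2 * π * σ ^ 2) ^ (-(1:ℝ)/2)) ^ n := by
    rw [← Real.rpow_natCast ((2 * π * σ ^ 2) ^ (-(1:ℝ)/2)) n, ← Real.rpow_mul h2πσ.le]
    congr 1; ring
  set f : Fin n → Fin n → ℝ → ℝ := fun j k =>
    if k = j then (fun t => (t ^ 2 - a j * Real.cos (ξ j * t)) * g σ (θ k) t)
    else g σ (θ k) with hf
  have hpt : ∀ x : EuclideanSpace ℝ (Fin n),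
      (‖x‖ ^ 2 - ∑ j, a j * Real.cos (ξ j * x j)) *
        ((2 * π * σ ^ 2) ^ (-(n : ℝ) / 2) * Real.exp (-‖x - θ‖ ^ 2 / (2 * σ ^ 2)))
      = ∑ j, ∏ k, f j k (x k) := by
    intro x
    have hn : ‖x‖ ^ 2 = ∑ j, (x j) ^ 2 := by
      rw [EuclideanSpace.norm_eq, Real.sq_sqrt (by positivity)]
      simp [Real.norm_eq_abs, sq_abs]
    have hn2 : ‖x - θ‖ ^ 2 = ∑ j, (x j - θ j) ^ 2 := by
      rw [EuclideanSpace.norm_eq, Real.sq_sqrt (by positivity)]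
      simp [Real.norm_eq_abs, sq_abs, PiLp.sub_apply]
    have hprod : (2 * π * σ ^ 2) ^ (-(n : ℝ) / 2) * Real.exp (-‖x - θ‖ ^ 2 / (2 * σ ^ 2))
        = ∏ k, g σ (θ k) (x k) := by
      rw [hn2, hCn]
      simp only [g]
      rw [Finset.prod_mul_distrib, Finset.prod_const, Finset.card_univ, Fintype.card_fin]
      congr 1
      rw [← Real.exp_sum]
      congr 1
      rw [neg_div, Finset.sum_div, ← Finset.sum_neg_distrib]
      simp [neg_div]
    rw [hn, hprod, ← Finset.sum_sub_distrib, Finset.sum_mul]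
    refine Finset.sum_congr rfl fun j _ => ?_
    rw [← Finset.mul_prod_erase Finset.univ (fun k => f j k (x k)) (Finset.mem_univ j),
      ← Finset.mul_prod_erase Finset.univ (fun k => g σ (θ k) (x k)) (Finset.mem_univ j)]
    have herase : ∀ k ∈ Finset.univ.erase j, f j k (x k) = g σ (θ k) (x k) := by
      intro k hk
      rw [hf]
      simp only [if_neg (Finset.mem_erase.mp hk).1]
    rw [Finset.prod_congr rfl herase]
    have hjj : f j j = fun t => (t ^ 2 - a j * Real.cos (ξ j * t)) * g σ (θ j) t := by
      rw [hf]; simp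
    rw [hjj]
    ring
  simp only [hpt]
  have htrans : ∀ F : EuclideanSpace ℝ (Fin n) → ℝ,
      ∫ x, F x = ∫ y : Fin n → ℝ, F ((MeasurableEquiv.toLp 2 (Fin n → ℝ)).symm.symm y) :=
    fun F => ((MeasurePreserving.symm (MeasurableEquiv.toLp 2 (Fin n → ℝ)).symm
      (EuclideanSpace.volume_preserving_symm_measurableEquiv_toLp (Fin n))).integral_comp' F).symm
  rw [htrans]
  have hcoord : ∀ (y : Fin n → ℝ),
      (∑ j, ∏ k, f j k (((MeasurableEquiv.toLp 2 (Fin n → ℝ)).symm.symm y) k))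
      = ∑ j, ∏ k, f j k (y k) := fun y => rfl
  simp only [hcoord]
  have hfint : ∀ j k, Integrable (f j k) := by
    intro j k
    rw [hf]
    dsimp only
    split
    · exact integrable_h hσ _ _
    · exact integrable_g hσ
  rw [integral_finset_sum (μ := (volume : Measure (Fin n → ℝ))) Finset.univ
    (fun j _ => Integrable.fintype_prod (𝕜 := ℝ) (f := f j) (fun k => hfint j k))]
  have hprodint : ∀ j, (∫ y : Fin n → ℝ, ∏ k, f j k (y k)) = ∏ k, ∫ t, f j k t :=
    fun j => MeasureTheory.integral_fintype_prod_eq_prod (f j)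
  simp only [hprodint]
  have hval : ∀ j, (∏ k, ∫ t, f j k t)
      = σ ^ 2 + (θ j) ^ 2 - a j * Real.cos (ξ j * θ j) * rexp (-(1/2) * σ ^ 2 * ξ j ^ 2) := by
    intro j
    rw [← Finset.mul_prod_erase Finset.univ _ (Finset.mem_univ j)]
    have h1 : ∀ k ∈ Finset.univ.erase j, (∫ t, f j k t) = 1 := by
      intro k hk
      rw [hf]
      simp only [if_neg (Finset.mem_erase.mp hk).1]
      exact integral_g hσ
    rw [Finset.prod_congr rfl h1, Finset.prod_const_one, mul_one]
    have hjj : f j j = fun t => (t ^ 2 - a j * Real.cos (ξ j * t)) * g σ (θ j) t := by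
      rw [hf]; simp
    rw [hjj]
    exact integral_h hσ _ _
  rw [Finset.sum_congr rfl (fun j _ => hval j)]
  have hθ : ‖θ‖ ^ 2 = ∑ j, (θ j) ^ 2 := by
    rw [EuclideanSpace.norm_eq, Real.sq_sqrt (by positivity)]
    simp [Real.norm_eq_abs, sq_abs]
  rw [Finset.sum_sub_distrib, Finset.sum_add_distrib, Finset.sum_const, Finset.card_univ,
    Fintype.card_fin, hθ]
  push_cast
  ring
end

section
/- Let f be the Rastrigin function on ℝⁿ with parameters a_j, ξ_j > 0, and let σ > 0 satisfy σ² > (2/ξ_j²)·log(a_j ξ_j²/2) for every j = 1,…,n. Then the map θ ∈ ℝⁿ ↦ ∫_{ℝⁿ} f dN(θ, σ²I) is strictly convex. -/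
open MeasureTheory Real
open scoped BigOperators

noncomputable section

section Aux
open Complex in

lemma A4 {b : ℝ} (hb : 0 < b) (t : ℝ) :
    ∫ x : ℝ, Real.cos (t * x) * rexp (-(b * x ^ 2)) = √(π / b) * rexp (-(t ^ 2 / (4 * b))) := by
  have hb' : 0 < (b : ℂ).re := by simpa using hb
  have key := fourierIntegral_gaussian hb' (t : ℂ)
  have hint : Integrable (fun x : ℝ => cexp (I * t * x) * cexp (-(b:ℂ) * x ^ 2)) := by
    have h := integrable_cexp_quadratic hb' (I * t) 0
    have he : (fun x : ℝ => cexp (I * t * x) * cexp (-(b:ℂ) * x ^ 2))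
        = fun x : ℝ => cexp (-(b:ℂ) * x ^ 2 + I * t * x + 0) := by
      funext x
      rw [← Complex.exp_add]
      ring_nf
    rw [he]
    exact h
  have hre := integral_re hint
  rw [key] at hre
  simp only [RCLike.re_to_complex] at hre
  have hlhs : ∀ x : ℝ, (cexp (I * t * x) * cexp (-(b:ℂ) * x ^ 2)).re
      = Real.cos (t * x) * rexp (-(b * x ^ 2)) := by
    intro x
    have h1 : cexp (-(b:ℂ) * x ^ 2) = ((rexp (-(b * x ^ 2)) : ℝ) : ℂ) := by
      rw [Complex.ofReal_exp]
      push_cast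
      ring_nf
    have h2 : I * (t : ℂ) * x = ((t * x : ℝ) : ℂ) * I := by push_cast; ring
    rw [h1, h2, mul_comm, Complex.re_ofReal_mul, Complex.exp_ofReal_mul_I_re]
    ring
  have hrhs : (((π : ℂ) / b) ^ (1 / 2 : ℂ) * cexp (-(t:ℂ) ^ 2 / (4 * b))).re
      = √(π / b) * rexp (-(t ^ 2 / (4 * b))) := by
    have h1 : ((π : ℂ) / b) ^ (1 / 2 : ℂ) = ((√(π / b) : ℝ) : ℂ) := by
      rw [show ((π : ℂ) / b) = ((π / b : ℝ) : ℂ) by push_cast; ring,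
        show ((1 / 2 : ℂ)) = (((1 / 2 : ℝ) : ℂ)) by push_cast; ring,
        ← Complex.ofReal_cpow (div_pos pi_pos hb).le, ← Real.sqrt_eq_rpow]
    have h2 : cexp (-(t:ℂ) ^ 2 / (4 * b)) = ((rexp (-(t ^ 2 / (4 * b))) : ℝ) : ℂ) := by
      rw [Complex.ofReal_exp]
      push_cast
      ring_nf
    rw [h1, h2, ← Complex.ofReal_mul, Complex.ofReal_re]
  rw [← hrhs, ← hre]
  exact integral_congr_ae (Filter.Eventually.of_forall fun x => (hlhs x).symm)


lemma A2 {b : ℝ} : ∫ x : ℝ, x * exp (-(b * x ^ 2)) = 0 := by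
  have h := MeasureTheory.integral_neg_eq_self (fun x : ℝ => x * exp (-(b * x ^ 2))) volume
  simp only [neg_sq, neg_mul] at h
  rw [integral_neg] at h
  linarith

lemma A5 {b t : ℝ} : ∫ x : ℝ, sin (t * x) * exp (-(b * x ^ 2)) = 0 := by
  have h := MeasureTheory.integral_neg_eq_self (fun x : ℝ => sin (t * x) * exp (-(b * x ^ 2))) volume
  simp only [neg_sq, mul_neg, Real.sin_neg, neg_mul] at h
  rw [integral_neg] at h
  linarith

lemma A3int {b : ℝ} (hb : 0 < b) : Integrable (fun x : ℝ => x ^ 2 * exp (-(b * x ^ 2))) := by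
  have := integrable_rpow_mul_exp_neg_mul_sq hb (s := 2) (by norm_num)
  simpa [Real.rpow_natCast, neg_mul] using this

lemma A3 {b : ℝ} (hb : 0 < b) : ∫ x : ℝ, x ^ 2 * exp (-(b * x ^ 2)) = √(π / b) / (2 * b) := by
  have h1 : ∫ x : ℝ, |x| ^ 2 * exp (-(b * |x| ^ 2)) = 2 * ∫ x in Set.Ioi (0:ℝ), x ^ 2 * exp (-(b * x ^ 2)) :=
    integral_comp_abs (f := fun x => x ^ 2 * exp (-(b * x ^ 2)))
  simp only [sq_abs] at h1
  have h2 : ∫ x in Set.Ioi (0:ℝ), x ^ 2 * exp (-(b * x ^ 2))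
      = b ^ (-(2 + 1) / 2 : ℝ) * (1 / 2) * Real.Gamma ((2 + 1) / 2) := by
    have h := integral_rpow_mul_exp_neg_mul_rpow (p := 2) (q := 2) (b := b)
      (by norm_num) (by norm_num) hb
    have rpow2 : ∀ y : ℝ, y ^ (2:ℝ) = y ^ (2:ℕ) := fun y => by
      rw [show (2:ℝ) = ((2:ℕ):ℝ) by norm_num, Real.rpow_natCast]
    simp only [rpow2, neg_mul] at h
    rw [← h]
  have h3 : Real.Gamma ((2 + 1) / 2 : ℝ) = √π / 2 := by
    have : ((2:ℝ) + 1) / 2 = 1/2 + 1 := by norm_num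
    rw [this, Real.Gamma_add_one (by norm_num), Real.Gamma_one_half_eq]
    ring
  rw [h1, h2, h3]
  have hb3 : b ^ (-(2 + 1) / 2 : ℝ) = (b * √b)⁻¹ := by
    rw [show (-(2 + 1) / 2 : ℝ) = -(1 + 1/2) by norm_num, Real.rpow_neg hb.le,
      Real.rpow_add hb, Real.rpow_one, ← Real.sqrt_eq_rpow]
  rw [hb3, Real.sqrt_div pi_pos.le]
  have hsb : (0:ℝ) < √b := Real.sqrt_pos.mpr hb
  have hbb : √b * √b = b := Real.mul_self_sqrt hb.le
  field_simp


section OneD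
variable {σ : ℝ} (hσ : 0 < σ)

lemma hbeta (hσ : 0 < σ) : 0 < (2 * σ ^ 2)⁻¹ := by positivity

lemma expo_eq (θ t : ℝ) : -(t - θ) ^ 2 / (2 * σ ^ 2) = -((2 * σ ^ 2)⁻¹ * (t - θ) ^ 2) := by
  ring

lemma hK (hσ : 0 < σ) :
    (2 * π * σ ^ 2) ^ (-(1:ℝ)/2) * √(π / (2 * σ ^ 2)⁻¹) = 1 := by
  have h2 : π / (2 * σ ^ 2)⁻¹ = 2 * π * σ ^ 2 := by
    field_simp
  have hx : (0:ℝ) < 2 * π * σ ^ 2 := by positivity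
  rw [h2, Real.sqrt_eq_rpow, ← Real.rpow_add hx]
  norm_num

-- generic: for any "profile" integrand
lemma shift_integrable {W : ℝ → ℝ} (hW : Integrable W) (θ : ℝ) :
    Integrable (fun t : ℝ => W (t - θ)) :=
  hW.comp_sub_right θ

lemma G2 (hσ : 0 < σ) (θ : ℝ) :
    Integrable (fun t : ℝ => (2 * π * σ ^ 2) ^ (-(1:ℝ)/2) * rexp (-(t - θ) ^ 2 / (2 * σ ^ 2))) := by
  have hW : Integrable (fun u : ℝ => (2 * π * σ ^ 2) ^ (-(1:ℝ)/2)
      * rexp (-((2 * σ ^ 2)⁻¹ * u ^ 2))) := by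
    simpa [neg_mul] using (integrable_exp_neg_mul_sq (hbeta hσ)).const_mul ((2 * π * σ ^ 2) ^ (-(1:ℝ)/2))
  have := hW.comp_sub_right θ
  refine this.congr (Filter.Eventually.of_forall fun t => ?_)
  simp only [expo_eq]

lemma G1 (hσ : 0 < σ) (θ : ℝ) :
    ∫ t : ℝ, (2 * π * σ ^ 2) ^ (-(1:ℝ)/2) * rexp (-(t - θ) ^ 2 / (2 * σ ^ 2)) = 1 := by
  simp_rw [expo_eq]
  rw [integral_sub_right_eq_self
    (fun u : ℝ => (2 * π * σ ^ 2) ^ (-(1:ℝ)/2) * rexp (-((2 * σ ^ 2)⁻¹ * u ^ 2))) θ]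
  rw [integral_const_mul]
  simp_rw [← neg_mul]
  rw [integral_gaussian]
  exact hK hσ

end OneD

lemma G4 (hσ : 0 < σ) (θ : ℝ) :
    Integrable (fun t : ℝ => t ^ 2 *
      ((2 * π * σ ^ 2) ^ (-(1:ℝ)/2) * rexp (-(t - θ) ^ 2 / (2 * σ ^ 2)))) := by
  set K := (2 * π * σ ^ 2) ^ (-(1:ℝ)/2) with hKdef
  have hW : Integrable (fun u : ℝ => (u + θ) ^ 2 * (K * rexp (-((2 * σ ^ 2)⁻¹ * u ^ 2)))) := by
    have h1 : Integrable (fun u : ℝ => u ^ 2 * exp (-((2 * σ ^ 2)⁻¹ * u ^ 2))) := A3int (hbeta hσ)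
    have h2 : Integrable (fun u : ℝ => u * exp (-((2 * σ ^ 2)⁻¹ * u ^ 2))) := by
      simpa [neg_mul] using integrable_mul_exp_neg_mul_sq (hbeta hσ)
    have h3 : Integrable (fun u : ℝ => exp (-((2 * σ ^ 2)⁻¹ * u ^ 2))) := by
      simpa [neg_mul] using integrable_exp_neg_mul_sq (hbeta hσ)
    have hA : Integrable (fun u : ℝ => K * (u ^ 2 * exp (-((2 * σ ^ 2)⁻¹ * u ^ 2)))) :=
      h1.const_mul K
    have hB : Integrable (fun u : ℝ => (K * (2*θ)) * (u * exp (-((2 * σ ^ 2)⁻¹ * u ^ 2)))) :=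
      h2.const_mul _
    have hC : Integrable (fun u : ℝ => (K * θ^2) * exp (-((2 * σ ^ 2)⁻¹ * u ^ 2))) :=
      h3.const_mul _
    refine ((hA.add hB).add hC).congr (Filter.Eventually.of_forall fun u => ?_)
    simp only [Pi.add_apply]
    ring
  have := hW.comp_sub_right θ
  refine this.congr (Filter.Eventually.of_forall fun t => ?_)
  simp only [expo_eq, sub_add_cancel]

lemma G3 (hσ : 0 < σ) (θ : ℝ) :
    ∫ t : ℝ, t ^ 2 * ((2 * π * σ ^ 2) ^ (-(1:ℝ)/2) * rexp (-(t - θ) ^ 2 / (2 * σ ^ 2)))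
      = θ ^ 2 + σ ^ 2 := by
  set K := (2 * π * σ ^ 2) ^ (-(1:ℝ)/2) with hKdef
  set β := (2 * σ ^ 2)⁻¹ with hβdef
  have hβ : 0 < β := hbeta hσ
  simp_rw [expo_eq]
  rw [show (fun t : ℝ => t ^ 2 * (K * rexp (-(β * (t - θ) ^ 2))))
      = fun t : ℝ => (fun u : ℝ => (u + θ) ^ 2 * (K * rexp (-(β * u ^ 2)))) (t - θ) by
    funext t; simp only [sub_add_cancel]]
  rw [integral_sub_right_eq_self (fun u : ℝ => (u + θ) ^ 2 * (K * rexp (-(β * u ^ 2)))) θ]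
  have h1 : Integrable (fun u : ℝ => u ^ 2 * exp (-(β * u ^ 2))) := A3int hβ
  have h2 : Integrable (fun u : ℝ => u * exp (-(β * u ^ 2))) := by
    simpa [neg_mul] using integrable_mul_exp_neg_mul_sq hβ
  have h3 : Integrable (fun u : ℝ => exp (-(β * u ^ 2))) := by
    simpa [neg_mul] using integrable_exp_neg_mul_sq hβ
  have expand : (fun u : ℝ => (u + θ) ^ 2 * (K * rexp (-(β * u ^ 2))))
      = fun u : ℝ => K * (u ^ 2 * exp (-(β * u ^ 2))) + ((K * (2*θ)) * (u * exp (-(β * u ^ 2)))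
          + (K * θ ^ 2) * exp (-(β * u ^ 2))) := by
    funext u; ring
  have hA : Integrable (fun u : ℝ => K * (u ^ 2 * exp (-(β * u ^ 2)))) := h1.const_mul K
  have hB : Integrable (fun u : ℝ => (K * (2*θ)) * (u * exp (-(β * u ^ 2)))) := h2.const_mul _
  have hC : Integrable (fun u : ℝ => (K * θ^2) * exp (-(β * u ^ 2))) := h3.const_mul _
  have hBC : Integrable (fun u : ℝ => (K * (2*θ)) * (u * exp (-(β * u ^ 2)))
      + (K * θ^2) * exp (-(β * u ^ 2))) := hB.add hC
  rw [expand, integral_add hA hBC, integral_add hB hC,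
    integral_const_mul, integral_const_mul, integral_const_mul, A3 hβ, A2]
  have hg : ∫ u : ℝ, exp (-(β * u ^ 2)) = √(π / β) := by
    simp_rw [← neg_mul]; exact integral_gaussian β
  rw [hg]
  have hK1 : K * √(π / β) = 1 := hK hσ
  have hsig : β⁻¹ = 2 * σ ^ 2 := by
    rw [hβdef, inv_inv]
  have : K * (√(π / β) / (2 * β)) = σ ^ 2 := by
    have hβ0 : β ≠ 0 := ne_of_gt hβ
    have : K * (√(π / β) / (2 * β)) = (K * √(π / β)) * (2 * β)⁻¹ := by ring
    rw [this, hK1, one_mul]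
    rw [mul_inv, hsig]  -- (2β)⁻¹ = 2⁻¹ * β⁻¹ = 2⁻¹ * 2σ² = σ²
    ring
  linear_combination this + θ ^ 2 * hK1

lemma G6 (hσ : 0 < σ) (θ c : ℝ) :
    Integrable (fun t : ℝ => Real.cos (c * t) *
      ((2 * π * σ ^ 2) ^ (-(1:ℝ)/2) * rexp (-(t - θ) ^ 2 / (2 * σ ^ 2)))) := by
  refine Integrable.bdd_mul (G2 hσ θ) ?_ (c := 1) (Filter.Eventually.of_forall fun t => by
    simpa using Real.abs_cos_le_one (c * t))
  exact (Real.continuous_cos.comp (continuous_const.mul continuous_id)).aestronglyMeasurable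

lemma G5 (hσ : 0 < σ) (θ c : ℝ) :
    ∫ t : ℝ, Real.cos (c * t) * ((2 * π * σ ^ 2) ^ (-(1:ℝ)/2) * rexp (-(t - θ) ^ 2 / (2 * σ ^ 2)))
      = rexp (-(c ^ 2 * σ ^ 2 / 2)) * Real.cos (c * θ) := by
  set K := (2 * π * σ ^ 2) ^ (-(1:ℝ)/2) with hKdef
  set β := (2 * σ ^ 2)⁻¹ with hβdef
  have hβ : 0 < β := hbeta hσ
  simp_rw [expo_eq]
  rw [show (fun t : ℝ => Real.cos (c * t) * (K * rexp (-(β * (t - θ) ^ 2))))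
      = fun t : ℝ => (fun u : ℝ => Real.cos (c * (u + θ)) * (K * rexp (-(β * u ^ 2)))) (t - θ) by
    funext t; simp only [sub_add_cancel]]
  rw [integral_sub_right_eq_self (fun u : ℝ => Real.cos (c * (u + θ)) * (K * rexp (-(β * u ^ 2)))) θ]
  have hcos : Integrable (fun u : ℝ => Real.cos (c * u) * exp (-(β * u ^ 2))) := by
    refine Integrable.bdd_mul (by simpa [neg_mul] using integrable_exp_neg_mul_sq hβ) ?_
      (c := 1) (Filter.Eventually.of_forall fun t => by simpa using Real.abs_cos_le_one (c * t))
    exact (Real.continuous_cos.comp (continuous_const.mul continuous_id)).aestronglyMeasurable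
  have hsin : Integrable (fun u : ℝ => Real.sin (c * u) * exp (-(β * u ^ 2))) := by
    refine Integrable.bdd_mul (by simpa [neg_mul] using integrable_exp_neg_mul_sq hβ) ?_
      (c := 1) (Filter.Eventually.of_forall fun t => by simpa using Real.abs_sin_le_one (c * t))
    exact (Real.continuous_sin.comp (continuous_const.mul continuous_id)).aestronglyMeasurable
  have expand : (fun u : ℝ => Real.cos (c * (u + θ)) * (K * rexp (-(β * u ^ 2))))
      = fun u : ℝ => (K * Real.cos (c * θ)) * (Real.cos (c * u) * exp (-(β * u ^ 2)))
        - (K * Real.sin (c * θ)) * (Real.sin (c * u) * exp (-(β * u ^ 2))) := by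
    funext u
    rw [mul_add, Real.cos_add]
    ring
  have hA : Integrable (fun u : ℝ => (K * Real.cos (c * θ)) * (Real.cos (c * u) * exp (-(β * u ^ 2)))) :=
    hcos.const_mul _
  have hB : Integrable (fun u : ℝ => (K * Real.sin (c * θ)) * (Real.sin (c * u) * exp (-(β * u ^ 2)))) :=
    hsin.const_mul _
  rw [expand, integral_sub hA hB, integral_const_mul, integral_const_mul, A4 hβ c, A5]
  have harg : c ^ 2 / (4 * β) = c ^ 2 * σ ^ 2 / 2 := by
    rw [hβdef]
    field_simp
    ring
  rw [harg]
  have hK1 : K * √(π / β) = 1 := hK hσ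
  calc K * Real.cos (c * θ) * (√(π / β) * rexp (-(c ^ 2 * σ ^ 2 / 2))) - K * Real.sin (c * θ) * 0
      = (K * √(π / β)) * (rexp (-(c ^ 2 * σ ^ 2 / 2)) * Real.cos (c * θ)) := by ring
    _ = rexp (-(c ^ 2 * σ ^ 2 / 2)) * Real.cos (c * θ) := by rw [hK1]; ring


lemma phi_strict {c k s : ℝ} (hc : 0 ≤ c) (h : c * k ^ 2 < 2) :
    StrictConvexOn ℝ Set.univ (fun t : ℝ => t ^ 2 + s - c * Real.cos (k * t)) := by
  have hd1 : ∀ t : ℝ, HasDerivAt (fun t : ℝ => t ^ 2 + s - c * Real.cos (k * t))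
      (2 * t + c * k * Real.sin (k * t)) t := by
    intro t
    have h1 : HasDerivAt (fun t : ℝ => k * t) k t := by
      simpa using (hasDerivAt_id t).const_mul k
    have h2 : HasDerivAt (fun t : ℝ => Real.cos (k * t)) (-Real.sin (k * t) * k) t :=
      (Real.hasDerivAt_cos (k * t)).comp t h1
    have h3 : HasDerivAt (fun t : ℝ => t ^ 2 + s) (2 * t) t := by
      simpa using ((hasDerivAt_pow 2 t).add_const s)
    have := h3.sub ((h2.const_mul c))
    exact this.congr_deriv (by ring)
  have hd2 : ∀ t : ℝ, HasDerivAt (fun t : ℝ => 2 * t + c * k * Real.sin (k * t))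
      (2 + c * k ^ 2 * Real.cos (k * t)) t := by
    intro t
    have h1 : HasDerivAt (fun t : ℝ => k * t) k t := by
      simpa using (hasDerivAt_id t).const_mul k
    have h2 : HasDerivAt (fun t : ℝ => Real.sin (k * t)) (Real.cos (k * t) * k) t :=
      (Real.hasDerivAt_sin (k * t)).comp t h1
    have h3 : HasDerivAt (fun t : ℝ => 2 * t) 2 t := by
      simpa using (hasDerivAt_id t).const_mul 2
    have := h3.add ((h2.const_mul (c * k)))
    exact this.congr_deriv (by ring)
  have hder : deriv (fun t : ℝ => t ^ 2 + s - c * Real.cos (k * t))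
      = fun t : ℝ => 2 * t + c * k * Real.sin (k * t) := funext fun t => (hd1 t).deriv
  refine strictConvexOn_of_deriv2_pos convex_univ ?_ ?_
  · exact (Continuous.sub (by continuity) (by continuity)).continuousOn
  · intro x _
    rw [show deriv^[2] (fun t : ℝ => t ^ 2 + s - c * Real.cos (k * t))
        = deriv (deriv (fun t : ℝ => t ^ 2 + s - c * Real.cos (k * t))) from rfl, hder,
      (hd2 x).deriv]
    nlinarith [Real.neg_one_le_cos (k * x), mul_nonneg hc (sq_nonneg k)]

lemma coeff_lt {aj kj σ : ℝ} (ha : 0 < aj) (hk : 0 < kj) (hσ : 0 < σ)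
    (h : 2 / kj ^ 2 * Real.log (aj * kj ^ 2 / 2) < σ ^ 2) :
    (aj * rexp (-(kj ^ 2 * σ ^ 2 / 2))) * kj ^ 2 < 2 := by
  have hk2 : 0 < kj ^ 2 := by positivity
  have h1 : Real.log (aj * kj ^ 2 / 2) < σ ^ 2 * kj ^ 2 / 2 := by
    rw [div_mul_eq_mul_div, div_lt_iff₀ hk2] at h
    nlinarith
  have hpos : 0 < aj * kj ^ 2 / 2 := by positivity
  have h2 : aj * kj ^ 2 / 2 < rexp (σ ^ 2 * kj ^ 2 / 2) := by
    calc aj * kj ^ 2 / 2 = rexp (Real.log (aj * kj ^ 2 / 2)) := (Real.exp_log hpos).symm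
      _ < rexp (σ ^ 2 * kj ^ 2 / 2) := Real.exp_lt_exp.mpr h1
  have hE : rexp (-(kj ^ 2 * σ ^ 2 / 2)) = (rexp (σ ^ 2 * kj ^ 2 / 2))⁻¹ := by
    rw [← Real.exp_neg]; ring_nf
  rw [hE]
  have hEpos : 0 < rexp (σ ^ 2 * kj ^ 2 / 2) := Real.exp_pos _
  rw [mul_comm aj _, mul_assoc, inv_mul_lt_iff₀ hEpos]
  nlinarith


lemma sum_strictConvexOn {n : ℕ} (φ : Fin n → ℝ → ℝ)
    (hφ : ∀ j, StrictConvexOn ℝ Set.univ (φ j)) :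
    StrictConvexOn ℝ Set.univ
      (fun θ : EuclideanSpace ℝ (Fin n) => ∑ j, φ j (θ j)) := by
  refine ⟨convex_univ, fun x _ y _ hxy p q hp hq hpq => ?_⟩
  have hj : ∃ j, x j ≠ y j := by
    by_contra hcon
    push_neg at hcon
    exact hxy (by ext j; exact hcon j)
  obtain ⟨j0, hj0⟩ := hj
  have hcoord : ∀ j, (p • x + q • y) j = p * x j + q * y j := by
    intro j
    simp [PiLp.add_apply, PiLp.smul_apply, smul_eq_mul]
  simp only [hcoord]
  simp only [smul_eq_mul]
  rw [Finset.mul_sum, Finset.mul_sum, ← Finset.sum_add_distrib]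
  refine Finset.sum_lt_sum (fun j _ => ?_) ⟨j0, Finset.mem_univ j0, ?_⟩
  · exact (hφ j).convexOn.2 (Set.mem_univ _) (Set.mem_univ _) hp.le hq.le hpq
  · exact (hφ j0).2 (Set.mem_univ _) (Set.mem_univ _) hj0 hp hq hpq

variable {σ : ℝ}
lemma Gcomb (hσ : 0 < σ) (θ c A : ℝ) :
    ∫ t : ℝ, (t ^ 2 - A * Real.cos (c * t)) *
        ((2 * π * σ ^ 2) ^ (-(1:ℝ)/2) * rexp (-(t - θ) ^ 2 / (2 * σ ^ 2)))
      = θ ^ 2 + σ ^ 2 - A * rexp (-(c ^ 2 * σ ^ 2 / 2)) * Real.cos (c * θ) := by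
  have hexp : (fun t : ℝ => (t ^ 2 - A * Real.cos (c * t)) *
        ((2 * π * σ ^ 2) ^ (-(1:ℝ)/2) * rexp (-(t - θ) ^ 2 / (2 * σ ^ 2))))
      = fun t : ℝ => t ^ 2 * ((2 * π * σ ^ 2) ^ (-(1:ℝ)/2) * rexp (-(t - θ) ^ 2 / (2 * σ ^ 2)))
        - A * (Real.cos (c * t) * ((2 * π * σ ^ 2) ^ (-(1:ℝ)/2) * rexp (-(t - θ) ^ 2 / (2 * σ ^ 2)))) := by
    funext t; ring
  have hI2 : Integrable (fun t : ℝ => A * (Real.cos (c * t) *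
      ((2 * π * σ ^ 2) ^ (-(1:ℝ)/2) * rexp (-(t - θ) ^ 2 / (2 * σ ^ 2))))) :=
    (G6 hσ θ c).const_mul A
  rw [hexp, integral_sub (G4 hσ θ) hI2, integral_const_mul, G3 hσ θ, G5 hσ θ c]
  ring

lemma GcombInt (hσ : 0 < σ) (θ c A : ℝ) :
    Integrable (fun t : ℝ => (t ^ 2 - A * Real.cos (c * t)) *
        ((2 * π * σ ^ 2) ^ (-(1:ℝ)/2) * rexp (-(t - θ) ^ 2 / (2 * σ ^ 2)))) := by
  have := (G4 hσ θ).sub ((G6 hσ θ c).const_mul A)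
  refine this.congr (Filter.Eventually.of_forall fun t => ?_)
  simp only [Pi.sub_apply]
  ring

lemma E1 {n : ℕ} (a ξ : Fin n → ℝ) (hσ : 0 < σ) (θ : EuclideanSpace ℝ (Fin n)) :
    ∫ x : EuclideanSpace ℝ (Fin n),
        (‖x‖ ^ 2 - ∑ j, a j * Real.cos (ξ j * x j)) *
          ((2 * π * σ ^ 2) ^ (-(n : ℝ) / 2) * Real.exp (-‖x - θ‖ ^ 2 / (2 * σ ^ 2)))
      = ∑ j, (θ j ^ 2 + σ ^ 2 - a j * rexp (-(ξ j ^ 2 * σ ^ 2 / 2)) * Real.cos (ξ j * θ j)) := by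
  have hmp := (EuclideanSpace.volume_preserving_symm_measurableEquiv_toLp (Fin n)).symm
  rw [← hmp.integral_comp (MeasurableEquiv.measurableEmbedding _)]
  have hKn : (2 * π * σ ^ 2) ^ (-(n : ℝ) / 2) = ((2 * π * σ ^ 2) ^ (-(1:ℝ)/2)) ^ n := by
    rw [← Real.rpow_natCast ((2 * π * σ ^ 2) ^ (-(1:ℝ)/2)) n, ← Real.rpow_mul (by positivity)]
    ring_nf
  have hfun : ∀ y : Fin n → ℝ,
      (‖(MeasurableEquiv.toLp 2 (Fin n → ℝ)).symm.symm y‖ ^ 2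
          - ∑ j, a j * Real.cos (ξ j * ((MeasurableEquiv.toLp 2 (Fin n → ℝ)).symm.symm y) j)) *
        ((2 * π * σ ^ 2) ^ (-(n : ℝ) / 2)
          * rexp (-‖(MeasurableEquiv.toLp 2 (Fin n → ℝ)).symm.symm y - θ‖ ^ 2 / (2 * σ ^ 2)))
      = ∑ j, ((y j ^ 2 - a j * Real.cos (ξ j * y j)) *
          ∏ k, ((2 * π * σ ^ 2) ^ (-(1:ℝ)/2) * rexp (-(y k - θ k) ^ 2 / (2 * σ ^ 2)))) := by
    intro y
    have hco : ∀ j, ((MeasurableEquiv.toLp 2 (Fin n → ℝ)).symm.symm y) j = y j := fun _ => rfl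
    have hnorm : ‖(MeasurableEquiv.toLp 2 (Fin n → ℝ)).symm.symm y‖ ^ 2 = ∑ j, y j ^ 2 := by
      rw [EuclideanSpace.norm_eq, Real.sq_sqrt (by positivity)]
      simp [hco]
    have hsub : ‖(MeasurableEquiv.toLp 2 (Fin n → ℝ)).symm.symm y - θ‖ ^ 2
        = ∑ j, (y j - θ j) ^ 2 := by
      rw [EuclideanSpace.norm_eq, Real.sq_sqrt (by positivity)]
      simp [hco]
    rw [hnorm, hsub]
    simp only [hco]
    have hexp : rexp (-(∑ j, (y j - θ j) ^ 2) / (2 * σ ^ 2))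
        = ∏ j, rexp (-(y j - θ j) ^ 2 / (2 * σ ^ 2)) := by
      rw [← Real.exp_sum]
      congr 1
      rw [← Finset.sum_div, ← Finset.sum_neg_distrib]
    rw [hexp, hKn]
    have hpm : (((2 * π * σ ^ 2) ^ (-(1:ℝ)/2)) ^ n) * ∏ j, rexp (-(y j - θ j) ^ 2 / (2 * σ ^ 2))
        = ∏ j, ((2 * π * σ ^ 2) ^ (-(1:ℝ)/2) * rexp (-(y j - θ j) ^ 2 / (2 * σ ^ 2))) := by
      rw [Finset.prod_mul_distrib, Finset.prod_const, Finset.card_univ, Fintype.card_fin]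
    rw [hpm, ← Finset.sum_sub_distrib, Finset.sum_mul]
  rw [integral_congr_ae (Filter.Eventually.of_forall hfun)]
  have hsplit : ∀ (j : Fin n) (y : Fin n → ℝ),
      (y j ^ 2 - a j * Real.cos (ξ j * y j)) *
          ∏ k, ((2 * π * σ ^ 2) ^ (-(1:ℝ)/2) * rexp (-(y k - θ k) ^ 2 / (2 * σ ^ 2)))
      = ∏ k, (if k = j then (y k ^ 2 - a j * Real.cos (ξ j * y k)) *
            ((2 * π * σ ^ 2) ^ (-(1:ℝ)/2) * rexp (-(y k - θ k) ^ 2 / (2 * σ ^ 2)))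
          else (2 * π * σ ^ 2) ^ (-(1:ℝ)/2) * rexp (-(y k - θ k) ^ 2 / (2 * σ ^ 2))) := by
    intro j y
    rw [← Finset.mul_prod_erase Finset.univ
        (fun k => if k = j then (y k ^ 2 - a j * Real.cos (ξ j * y k)) *
            ((2 * π * σ ^ 2) ^ (-(1:ℝ)/2) * rexp (-(y k - θ k) ^ 2 / (2 * σ ^ 2)))
          else (2 * π * σ ^ 2) ^ (-(1:ℝ)/2) * rexp (-(y k - θ k) ^ 2 / (2 * σ ^ 2)))
        (Finset.mem_univ j),
      ← Finset.mul_prod_erase Finset.univ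
        (fun k => (2 * π * σ ^ 2) ^ (-(1:ℝ)/2) * rexp (-(y k - θ k) ^ 2 / (2 * σ ^ 2)))
        (Finset.mem_univ j)]
    have h2 : (∏ k ∈ Finset.univ.erase j, (if k = j then (y k ^ 2 - a j * Real.cos (ξ j * y k)) *
            ((2 * π * σ ^ 2) ^ (-(1:ℝ)/2) * rexp (-(y k - θ k) ^ 2 / (2 * σ ^ 2)))
          else (2 * π * σ ^ 2) ^ (-(1:ℝ)/2) * rexp (-(y k - θ k) ^ 2 / (2 * σ ^ 2))))
        = ∏ k ∈ Finset.univ.erase j,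
            ((2 * π * σ ^ 2) ^ (-(1:ℝ)/2) * rexp (-(y k - θ k) ^ 2 / (2 * σ ^ 2))) :=
      Finset.prod_congr rfl fun k hk => if_neg (Finset.ne_of_mem_erase hk)
    rw [h2, if_pos rfl]
    ring
  have hint : ∀ j ∈ Finset.univ, Integrable (fun y : Fin n → ℝ =>
      (y j ^ 2 - a j * Real.cos (ξ j * y j)) *
        ∏ k, ((2 * π * σ ^ 2) ^ (-(1:ℝ)/2) * rexp (-(y k - θ k) ^ 2 / (2 * σ ^ 2)))) := by
    intro j _
    have hprod := Integrable.fintype_prod (𝕜 := ℝ) (μ := fun _ => volume)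
      (f := fun k (t : ℝ) => if k = j then (t ^ 2 - a j * Real.cos (ξ j * t)) *
            ((2 * π * σ ^ 2) ^ (-(1:ℝ)/2) * rexp (-(t - θ k) ^ 2 / (2 * σ ^ 2)))
          else (2 * π * σ ^ 2) ^ (-(1:ℝ)/2) * rexp (-(t - θ k) ^ 2 / (2 * σ ^ 2)))
      (fun k => by
        by_cases hkj : k = j
        · simpa [hkj] using GcombInt hσ (θ k) (ξ j) (a j)
        · simpa [hkj] using G2 hσ (θ k))
    refine hprod.congr (Filter.Eventually.of_forall fun y => ?_)
    exact (hsplit j y).symm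
  rw [integral_finset_sum _ hint]
  refine Finset.sum_congr rfl fun j _ => ?_
  rw [integral_congr_ae (Filter.Eventually.of_forall (hsplit j))]
  have hfp : (∫ y : Fin n → ℝ, ∏ k, (if k = j then (y k ^ 2 - a j * Real.cos (ξ j * y k)) *
            ((2 * π * σ ^ 2) ^ (-(1:ℝ)/2) * rexp (-(y k - θ k) ^ 2 / (2 * σ ^ 2)))
          else (2 * π * σ ^ 2) ^ (-(1:ℝ)/2) * rexp (-(y k - θ k) ^ 2 / (2 * σ ^ 2))))
      = ∏ k, ∫ t : ℝ, (if k = j then (t ^ 2 - a j * Real.cos (ξ j * t)) *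
            ((2 * π * σ ^ 2) ^ (-(1:ℝ)/2) * rexp (-(t - θ k) ^ 2 / (2 * σ ^ 2)))
          else (2 * π * σ ^ 2) ^ (-(1:ℝ)/2) * rexp (-(t - θ k) ^ 2 / (2 * σ ^ 2))) :=
    MeasureTheory.integral_fintype_prod_volume_eq_prod
      (fun k (t : ℝ) => if k = j then (t ^ 2 - a j * Real.cos (ξ j * t)) *
            ((2 * π * σ ^ 2) ^ (-(1:ℝ)/2) * rexp (-(t - θ k) ^ 2 / (2 * σ ^ 2)))
          else (2 * π * σ ^ 2) ^ (-(1:ℝ)/2) * rexp (-(t - θ k) ^ 2 / (2 * σ ^ 2)))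
  rw [hfp]
  rw [Finset.prod_eq_single j (fun k _ hkj => by
      simp only [if_neg hkj]
      exact G1 hσ (θ k))
    (fun hj => absurd (Finset.mem_univ j) hj)]
  simp only [if_pos rfl]
  exact Gcomb hσ (θ j) (ξ j) (a j)

end Aux


theorem rastrigin_relaxation_strictConvex (n : ℕ) (a ξ : Fin n → ℝ)
    (ha : ∀ j, 0 < a j) (hξ : ∀ j, 0 < ξ j)
    (σ : ℝ) (hσ : 0 < σ)
    (hσ' : ∀ j, 2 / ξ j ^ 2 * Real.log (a j * ξ j ^ 2 / 2) < σ ^ 2) :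
    StrictConvexOn ℝ Set.univ
      (fun θ : EuclideanSpace ℝ (Fin n) =>
        ∫ x : EuclideanSpace ℝ (Fin n),
          (‖x‖ ^ 2 - ∑ j, a j * Real.cos (ξ j * x j)) *
            ((2 * π * σ ^ 2) ^ (-(n : ℝ) / 2) * Real.exp (-‖x - θ‖ ^ 2 / (2 * σ ^ 2)))) := by
  have hEq : (fun θ : EuclideanSpace ℝ (Fin n) =>
        ∫ x : EuclideanSpace ℝ (Fin n),
          (‖x‖ ^ 2 - ∑ j, a j * Real.cos (ξ j * x j)) *
            ((2 * π * σ ^ 2) ^ (-(n : ℝ) / 2) * Real.exp (-‖x - θ‖ ^ 2 / (2 * σ ^ 2))))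
      = fun θ : EuclideanSpace ℝ (Fin n) =>
          ∑ j, (fun t : ℝ => t ^ 2 + σ ^ 2
            - (a j * rexp (-(ξ j ^ 2 * σ ^ 2 / 2))) * Real.cos (ξ j * t)) (θ j) :=
    funext fun θ => E1 a ξ hσ θ
  rw [hEq]
  exact sum_strictConvexOn _ (fun j => phi_strict (mul_pos (ha j) (Real.exp_pos _)).le
    (coeff_lt (ha j) (hξ j) hσ (hσ' j)))

end
end

section
/- (Consistency) Let (Ω, d) be a metric space with Borel σ-algebra, let (P_θ)_{θ∈Θ} be a family of probability measures on Ω, let f : Ω → ℝ be integrable with respect to every P_θ, let f have a unique global minimum at x* ∈ Ω (i.e. f(x*) < f(y) for all y ≠ x*), let f be continuous at x*, and assume (P_θ)_{θ∈Θ} is f-concentrated at x*. Then for every x ∈ Ω with x ≠ x* there exists θ* ∈ Θ such that ∫_Ω f dP_{θ*} < f(x). -/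
open MeasureTheory

/-- Consistency: If `f` has a unique global minimum at `x*`, is continuous
there, and `(P_θ)` is `f`-concentrated at `x*`, then for every `x ≠ x*` some relaxation
value `∫ f dP_{θ*}` lies strictly below `f(x)`. -/
theorem consistency {Ω : Type*} [MetricSpace Ω] [MeasurableSpace Ω] [BorelSpace Ω]
    {Θ : Type*} (P : Θ → Measure Ω) (hprob : ∀ θ, IsProbabilityMeasure (P θ))
    (f : Ω → ℝ) (hint : ∀ θ, Integrable f (P θ)) (xs : Ω)
    (hmin : ∀ y, y ≠ xs → f xs < f y)
    (hcont : ContinuousAt f xs)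
    (hconc : ∀ ε > (0 : ℝ), ∀ δ > (0 : ℝ), ∃ θ,
      (∫ y in (Metric.ball xs δ)ᶜ, max |f y| 1 ∂(P θ)) < ε) :
    ∀ x, x ≠ xs → ∃ θ, (∫ y, f y ∂(P θ)) < f x := by
  intro x hx
  have hgap : 0 < f x - f xs := sub_pos.mpr (hmin x hx)
  set c := f xs + (f x - f xs) / 2 with hc
  obtain ⟨δ, hδ, hδball⟩ := Metric.continuousAt_iff.mp hcont ((f x - f xs) / 2) (by linarith)
  set ε := (f x - f xs) / 2 / (|c| + 1) with hε
  have hcpos : (0:ℝ) < |c| + 1 := by positivity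
  have hεpos : 0 < ε := div_pos (by linarith) hcpos
  clear_value c
  clear_value ε
  obtain ⟨θ, hθ⟩ := hconc ε hεpos δ hδ
  haveI := hprob θ
  refine ⟨θ, ?_⟩
  set s := Metric.ball xs δ with hs
  have hsm : MeasurableSet s := Metric.isOpen_ball.measurableSet
  have hg : Integrable (fun y => max |f y| 1) (P θ) := (hint θ).abs.sup (integrable_const 1)
  -- bound on the ball
  have hA : ∫ y in s, f y ∂(P θ) ≤ c * ((P θ) s).toReal := by
    have : ∫ y in s, f y ∂(P θ) ≤ ∫ _ in s, c ∂(P θ) := by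
      refine setIntegral_mono_on (hint θ).integrableOn (integrable_const c).integrableOn hsm ?_
      · intro y hy
        have := hδball (by simpa [s, Metric.mem_ball] using hy)
        rw [Real.dist_eq] at this
        have := abs_lt.mp this
        linarith [this.1, this.2]
    simpa [setIntegral_const, mul_comm, measureReal_def] using this
  -- bound off the ball
  have hB : ∫ y in sᶜ, f y ∂(P θ) < ε := by
    refine lt_of_le_of_lt ?_ hθ
    refine setIntegral_mono_on (hint θ).integrableOn hg.integrableOn hsm.compl ?_
    intro y _
    exact le_trans (le_abs_self _) (le_max_left _ _)
  -- measure of the complement is small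
  have hq : ((P θ) sᶜ).toReal ≤ ε := by
    refine le_of_lt (lt_of_le_of_lt ?_ hθ)
    have : ∫ _ in sᶜ, (1:ℝ) ∂(P θ) ≤ ∫ y in sᶜ, max |f y| 1 ∂(P θ) := by
      refine setIntegral_mono_on (integrable_const (1:ℝ)).integrableOn
        hg.integrableOn hsm.compl ?_
      intro y _; exact le_max_right _ _
    simpa [setIntegral_const, measureReal_def] using this
  have hsum : ((P θ) s).toReal + ((P θ) sᶜ).toReal = 1 := by
    rw [← ENNReal.toReal_add (measure_ne_top _ _) (measure_ne_top _ _),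
      measure_add_measure_compl hsm, measure_univ]
    simp
  have hsplit : ∫ y in s, f y ∂(P θ) + ∫ y in sᶜ, f y ∂(P θ) = ∫ y, f y ∂(P θ) :=
    integral_add_compl hsm (hint θ)
  have hqnn : 0 ≤ ((P θ) sᶜ).toReal := ENNReal.toReal_nonneg
  have hcm : c * ((P θ) s).toReal ≤ c + |c| * ε := by
    have h1 : c * ((P θ) s).toReal = c - c * ((P θ) sᶜ).toReal := by
      have hm : ((P θ) s).toReal = 1 - ((P θ) sᶜ).toReal := by linarith
      rw [hm]; ring
    rw [h1]
    have h2 : -c * ((P θ) sᶜ).toReal ≤ |c| * ε := by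
      calc -c * ((P θ) sᶜ).toReal ≤ |c| * ((P θ) sᶜ).toReal := by
            apply mul_le_mul_of_nonneg_right (neg_le_abs c) hqnn
        _ ≤ |c| * ε := mul_le_mul_of_nonneg_left hq (abs_nonneg c)
    linarith
  have hεval : (|c| + 1) * ε = (f x - f xs) / 2 := by
    rw [hε, mul_div_assoc', mul_div_cancel_left₀ _ hcpos.ne']
  have : ∫ y, f y ∂(P θ) < c + |c| * ε + ε := by
    rw [← hsplit]; linarith
  nlinarith [abs_nonneg c]
end

section
/- Let (Ω, d) be a metric space with Borel σ-algebra, let (P_θ)_{θ∈Θ} be a family of probability measures on Ω, let f : Ω → ℝ be measurable and integrable with respect to every P_θ, let f have a unique global minimum at x* ∈ Ω (i.e. f(x*) < f(y) for all y ≠ x*), let f be continuous at x*, and assume (P_θ)_{θ∈Θ} is f-concentrated at x*. If θ₀ ∈ Θ satisfies ∫_Ω f dP_{θ₀} ≤ ∫_Ω f dP_θ for all θ ∈ Θ, then ∫_Ω f dP_{θ₀} = f(x*) and P_{θ₀} is the Dirac measure at x*. -/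
open MeasureTheory

/-- Under the consistency assumptions, a minimizer `θ₀` of the relaxation
attains the value `f(x*)` and `P_{θ₀}` is the Dirac measure at the minimum `x*`. -/
theorem minimizer_is_dirac {Ω : Type*} [MetricSpace Ω] [MeasurableSpace Ω] [BorelSpace Ω]
    {Θ : Type*} (P : Θ → Measure Ω) (hprob : ∀ θ, IsProbabilityMeasure (P θ))
    (f : Ω → ℝ) (hmeas : Measurable f) (hint : ∀ θ, Integrable f (P θ)) (xs : Ω)
    (hmin : ∀ y, y ≠ xs → f xs < f y)
    (hcont : ContinuousAt f xs)
    (hconc : ∀ ε > (0 : ℝ), ∀ δ > (0 : ℝ), ∃ θ,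
      (∫ y in (Metric.ball xs δ)ᶜ, max |f y| 1 ∂(P θ)) < ε)
    (θ₀ : Θ) (hθ₀ : ∀ θ, (∫ y, f y ∂(P θ₀)) ≤ ∫ y, f y ∂(P θ)) :
    (∫ y, f y ∂(P θ₀)) = f xs ∧ P θ₀ = Measure.dirac xs := by
  have hfge : ∀ y, f xs ≤ f y := by
    intro y
    by_cases h : y = xs
    · simp [h]
    · exact (hmin y h).le
  have hlow : ∀ θ, f xs ≤ ∫ y, f y ∂(P θ) := by
    intro θ
    have := hprob θ
    calc f xs = ∫ _, f xs ∂(P θ) := by simp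
      _ ≤ ∫ y, f y ∂(P θ) := integral_mono (integrable_const _) (hint θ) hfge
  have hupper : ∀ ε > (0:ℝ), (∫ y, f y ∂(P θ₀)) ≤ f xs + ε := by
    intro ε hε
    set c := f xs + ε/2 with hc
    obtain ⟨δ, hδ, hδf⟩ : ∃ δ > 0, ∀ y ∈ Metric.ball xs δ, f y ≤ c := by
      rcases Metric.continuousAt_iff.mp hcont (ε/2) (by linarith) with ⟨δ, hδ, h⟩
      refine ⟨δ, hδ, fun y hy => ?_⟩
      have h2 := h (Metric.mem_ball.mp hy)
      rw [Real.dist_eq] at h2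
      have h3 := abs_lt.mp h2
      have := h3.1; have := h3.2
      rw [hc]; linarith
    set ε' := (ε/2) / (|c| + 1) with hε'
    have hε'pos : 0 < ε' := div_pos (by linarith) (by positivity)
    obtain ⟨θ, hθ⟩ := hconc ε' hε'pos δ hδ
    have hP := hprob θ
    set B := Metric.ball xs δ with hB
    have hBmeas : MeasurableSet B := Metric.isOpen_ball.measurableSet
    have hmaxint : Integrable (fun y => max |f y| 1) (P θ) :=
      (hint θ).abs.sup (integrable_const 1)
    have htcompl : (P θ Bᶜ).toReal ≤ ε' := by
      have h1 : (P θ Bᶜ).toReal = ∫ _ in Bᶜ, (1:ℝ) ∂(P θ) := by simp; rfl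
      have h2 : (∫ _ in Bᶜ, (1:ℝ) ∂(P θ)) ≤ ∫ y in Bᶜ, max |f y| 1 ∂(P θ) :=
        setIntegral_mono_on (integrableOn_const (measure_ne_top _ _))
          hmaxint.integrableOn hBmeas.compl (fun y _ => le_max_right _ _)
      linarith [hθ]
    have hsplit : (∫ y, f y ∂(P θ)) = (∫ y in B, f y ∂(P θ)) + ∫ y in Bᶜ, f y ∂(P θ) :=
      (integral_add_compl hBmeas (hint θ)).symm
    have hball : (∫ y in B, f y ∂(P θ)) ≤ (P θ B).toReal * c := by
      calc (∫ y in B, f y ∂(P θ)) ≤ ∫ _ in B, c ∂(P θ) :=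
          setIntegral_mono_on (hint θ).integrableOn
            (integrableOn_const (measure_ne_top _ _)) hBmeas hδf
        _ = (P θ B).toReal * c := by simp [smul_eq_mul]; left; rfl
    have hcompl : (∫ y in Bᶜ, f y ∂(P θ)) ≤ ε' := by
      calc (∫ y in Bᶜ, f y ∂(P θ)) ≤ ∫ y in Bᶜ, max |f y| 1 ∂(P θ) :=
          setIntegral_mono_on (hint θ).integrableOn hmaxint.integrableOn hBmeas.compl
            (fun y _ => le_trans (le_abs_self _) (le_max_left _ _))
        _ ≤ ε' := hθ.le
    have hsum : (P θ B).toReal + (P θ Bᶜ).toReal = 1 := by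
      rw [← ENNReal.toReal_add (measure_ne_top _ _) (measure_ne_top _ _),
        measure_add_measure_compl hBmeas, measure_univ, ENNReal.toReal_one]
    have h0 : 0 ≤ (P θ Bᶜ).toReal := ENNReal.toReal_nonneg
    have hcmul : (P θ B).toReal * c ≤ c + |c| * ε' := by
      have habs : |(P θ Bᶜ).toReal * c| ≤ ε' * |c| := by
        rw [abs_mul, abs_of_nonneg h0]
        exact mul_le_mul_of_nonneg_right htcompl (abs_nonneg c)
      have hneg := neg_abs_le ((P θ Bᶜ).toReal * c)
      have ht : (P θ B).toReal = 1 - (P θ Bᶜ).toReal := by linarith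
      have hcomm : |c| * ε' = ε' * |c| := mul_comm _ _
      have hexp : (P θ B).toReal * c = c - (P θ Bᶜ).toReal * c := by rw [ht]; ring
      linarith
    have hε'bound : (|c| + 1) * ε' = ε/2 := by
      rw [hε']; field_simp
    calc (∫ y, f y ∂(P θ₀)) ≤ ∫ y, f y ∂(P θ) := hθ₀ θ
      _ = (∫ y in B, f y ∂(P θ)) + ∫ y in Bᶜ, f y ∂(P θ) := hsplit
      _ ≤ (c + |c| * ε') + ε' := by linarith
      _ = c + (|c| + 1) * ε' := by ring
      _ = f xs + ε := by rw [hε'bound, hc]; ring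
  have heq : (∫ y, f y ∂(P θ₀)) = f xs :=
    le_antisymm (le_of_forall_pos_le_add hupper) (hlow θ₀)
  have hPθ₀ := hprob θ₀
  have hg : (fun y => f y - f xs) =ᵐ[P θ₀] 0 := by
    rw [← integral_eq_zero_iff_of_nonneg (fun y => sub_nonneg.mpr (hfge y))
      ((hint θ₀).sub (integrable_const _))]
    rw [integral_sub (hint θ₀) (integrable_const _), heq]
    simp
  have hnull : P θ₀ {xs}ᶜ = 0 := by
    have h0 : P θ₀ {y | ¬ ((fun y => f y - f xs) y = (0 : Ω → ℝ) y)} = 0 := ae_iff.mp hg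
    refine measure_mono_null ?_ h0
    intro y hy
    simp only [Set.mem_compl_iff, Set.mem_singleton_iff] at hy
    simp only [Set.mem_setOf_eq, Pi.zero_apply]
    exact sub_ne_zero.mpr (ne_of_gt (hmin y hy))
  refine ⟨heq, ?_⟩
  ext s hs
  rw [Measure.dirac_apply' xs hs]
  by_cases hx : xs ∈ s
  · have hsub : sᶜ ⊆ {xs}ᶜ := by
      intro y hy
      simp only [Set.mem_compl_iff, Set.mem_singleton_iff]
      intro h; exact hy (h ▸ hx)
    have hscompl : P θ₀ sᶜ = 0 := measure_mono_null hsub hnull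
    have h1 : P θ₀ s = 1 := by
      have h2 := measure_add_measure_compl (μ := P θ₀) hs
      rw [hscompl, add_zero, measure_univ] at h2
      exact h2
    simp [h1, Set.indicator_of_mem hx]
  · have hsub : s ⊆ {xs}ᶜ := by
      intro y hy
      simp only [Set.mem_compl_iff, Set.mem_singleton_iff]
      intro h; exact hx (h ▸ hy)
    simp [measure_mono_null hsub hnull, Set.indicator_of_notMem hx]
end

section
/- (Preserving strong convexity) Let P₀ be a probability measure on ℝⁿ (with Borel σ-algebra), and for θ ∈ ℝⁿ let P_θ(A) = P₀(A − θ) for all Borel sets A. Let f : ℝⁿ → ℝ be integrable with respect to every P_θ and m-strongly convex, i.e. for all v, w ∈ ℝⁿ and t ∈ [0,1], f(tv + (1−t)w) ≤ t f(v) + (1−t) f(w) − (1/2) m t(1−t)‖v−w‖². Then the relaxation F(θ) = ∫_{ℝⁿ} f dP_θ is m-strongly convex: F(tv + (1−t)w) ≤ t F(v) + (1−t) F(w) − (1/2) m t(1−t)‖v−w‖² for all v, w ∈ ℝⁿ and t ∈ [0,1]. -/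
open MeasureTheory

/-- Preserving strong convexity: If `f` is `m`-strongly convex, then its
relaxation `θ ↦ ∫ f dP_θ` with respect to the translated measures `P_θ = P₀(· − θ)` is
`m`-strongly convex as well. -/
theorem preserving_strong_convexity (n : ℕ)
    (P₀ : Measure (EuclideanSpace ℝ (Fin n))) [IsProbabilityMeasure P₀]
    (f : EuclideanSpace ℝ (Fin n) → ℝ)
    (hint : ∀ θ : EuclideanSpace ℝ (Fin n), Integrable f (P₀.map (· + θ)))
    (m : ℝ) (hm : 0 < m)
    (hconv : ∀ v w : EuclideanSpace ℝ (Fin n), ∀ t ∈ Set.Icc (0 : ℝ) 1,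
      f (t • v + (1 - t) • w)
        ≤ t * f v + (1 - t) * f w - 1 / 2 * m * t * (1 - t) * ‖v - w‖ ^ 2) :
    ∀ v w : EuclideanSpace ℝ (Fin n), ∀ t ∈ Set.Icc (0 : ℝ) 1,
      (∫ x, f x ∂(P₀.map (· + (t • v + (1 - t) • w))))
        ≤ t * (∫ x, f x ∂(P₀.map (· + v))) + (1 - t) * (∫ x, f x ∂(P₀.map (· + w)))
          - 1 / 2 * m * t * (1 - t) * ‖v - w‖ ^ 2 := by
  intro v w t ht
  have hmeas : ∀ θ : EuclideanSpace ℝ (Fin n),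
      Measurable (fun x : EuclideanSpace ℝ (Fin n) => x + θ) :=
    fun θ => measurable_id.add_const θ
  have hInt : ∀ θ : EuclideanSpace ℝ (Fin n), Integrable (fun x => f (x + θ)) P₀ := by
    intro θ
    exact (integrable_map_measure (hint θ).aestronglyMeasurable
      (hmeas θ).aemeasurable).mp (hint θ)
  have hEq : ∀ θ : EuclideanSpace ℝ (Fin n),
      (∫ x, f x ∂(P₀.map (· + θ))) = ∫ x, f (x + θ) ∂P₀ := by
    intro θ
    exact integral_map (hmeas θ).aemeasurable (hint θ).aestronglyMeasurable
  rw [hEq, hEq, hEq]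
  have key : ∀ x : EuclideanSpace ℝ (Fin n),
      f (x + (t • v + (1 - t) • w))
        ≤ t * f (x + v) + (1 - t) * f (x + w)
          - 1 / 2 * m * t * (1 - t) * ‖v - w‖ ^ 2 := by
    intro x
    have h := hconv (x + v) (x + w) t ht
    have h1 : t • (x + v) + (1 - t) • (x + w) = x + (t • v + (1 - t) • w) := by
      have : t • x + (1 - t) • x = x := by
        rw [← add_smul]; ring_nf; exact one_smul ℝ x
      simp only [smul_add]
      rw [add_add_add_comm, this]
    have h2 : (x + v) - (x + w) = v - w := by abel
    rw [h1, h2] at h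
    exact h
  have hI1 : Integrable (fun x => t * f (x + v) + (1 - t) * f (x + w)) P₀ :=
    ((hInt v).const_mul t).add ((hInt w).const_mul (1 - t))
  calc (∫ x, f (x + (t • v + (1 - t) • w)) ∂P₀)
      ≤ ∫ x, (t * f (x + v) + (1 - t) * f (x + w)
          - 1 / 2 * m * t * (1 - t) * ‖v - w‖ ^ 2) ∂P₀ := by
        exact integral_mono (hInt _) (hI1.sub (integrable_const _)) key
    _ = t * (∫ x, f (x + v) ∂P₀) + (1 - t) * (∫ x, f (x + w) ∂P₀)
          - 1 / 2 * m * t * (1 - t) * ‖v - w‖ ^ 2 := by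
        rw [integral_sub hI1 (integrable_const _),
          integral_add ((hInt v).const_mul t) ((hInt w).const_mul (1 - t)),
          integral_const_mul, integral_const_mul, integral_const]
        simp
end

section
/- (Deterministic cosine disturbance) Let f = r + g : ℝⁿ → ℝ where r is m-strongly convex and polynomially bounded (|r(x)| ≤ C(1+‖x‖)^p for some C ≥ 0, p ∈ ℕ), and g(x) = Σ_{j=1}^∞ a_j cos(⟨ξ_j, x⟩ + ψ_j) with Σ_j |a_j| < ∞ and with ‖ξ_j‖ ≥ ε for all j for some ε > 0. Let k : ℝⁿ → ℝ be a nonnegative Schwartz function with ∫_{ℝⁿ} k dλ = 1. Then for every m* < m there exists σ* > 0 such that for all σ > σ*, the map θ ∈ ℝⁿ ↦ ∫_{ℝⁿ} f(x) σ^{-n} k(σ^{-1}(x − θ)) λ(dx) is m*-strongly convex. -/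
open MeasureTheory Real FourierTransform
open scoped RealInnerProductSpace

variable {n : ℕ}



lemma aux_cos_sin_deficit (c₁ c₂ φ a b t : ℝ) (ht0 : 0 ≤ t) (ht1 : t ≤ 1) :
    c₁ * Real.cos (t * a + (1 - t) * b + φ) + c₂ * Real.sin (t * a + (1 - t) * b + φ)
      ≤ t * (c₁ * Real.cos (a + φ) + c₂ * Real.sin (a + φ))
        + (1 - t) * (c₁ * Real.cos (b + φ) + c₂ * Real.sin (b + φ))
        + 1 / 2 * (|c₁| + |c₂|) * (t * (1 - t) * (a - b) ^ 2) := by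
  set R : ℝ := |c₁| + |c₂| with hR
  set q : ℝ → ℝ := fun s => c₁ * Real.cos (s + φ) + c₂ * Real.sin (s + φ) + R / 2 * s ^ 2 with hq
  have hd1 : ∀ s : ℝ, HasDerivAt q (-c₁ * Real.sin (s + φ) + c₂ * Real.cos (s + φ) + R * s) s := by
    intro s
    have h1 : HasDerivAt (fun s : ℝ => s + φ) 1 s := (hasDerivAt_id s).add_const φ
    have hcos : HasDerivAt (fun s : ℝ => Real.cos (s + φ)) (-Real.sin (s + φ)) s := by
      simpa [Function.comp_def] using (Real.hasDerivAt_cos (s + φ)).comp s h1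
    have hsin : HasDerivAt (fun s : ℝ => Real.sin (s + φ)) (Real.cos (s + φ)) s := by
      simpa [Function.comp_def] using (Real.hasDerivAt_sin (s + φ)).comp s h1
    have hsq : HasDerivAt (fun s : ℝ => R / 2 * s ^ 2) (R * s) s := by
      have h := ((hasDerivAt_pow 2 s).const_mul (R / 2))
      exact h.congr_deriv (by ring)

    have := ((hcos.const_mul c₁).add (hsin.const_mul c₂)).add hsq
    exact this.congr_deriv (by ring)
  have hderiv : deriv q = fun s => -c₁ * Real.sin (s + φ) + c₂ * Real.cos (s + φ) + R * s :=
    funext fun s => (hd1 s).deriv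
  have hd2 : ∀ s : ℝ, HasDerivAt (deriv q)
      (-c₁ * Real.cos (s + φ) + c₂ * -Real.sin (s + φ) + R) s := by
    intro s
    rw [hderiv]
    have h1 : HasDerivAt (fun s : ℝ => s + φ) 1 s := (hasDerivAt_id s).add_const φ
    have hcos : HasDerivAt (fun s : ℝ => Real.cos (s + φ)) (-Real.sin (s + φ)) s := by
      simpa [Function.comp_def] using (Real.hasDerivAt_cos (s + φ)).comp s h1
    have hsin : HasDerivAt (fun s : ℝ => Real.sin (s + φ)) (Real.cos (s + φ)) s := by
      simpa [Function.comp_def] using (Real.hasDerivAt_sin (s + φ)).comp s h1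
    have hlin : HasDerivAt (fun s : ℝ => R * s) R s := by
      simpa using (hasDerivAt_id s).const_mul R
    have := ((hsin.const_mul (-c₁)).add (hcos.const_mul c₂)).add hlin
    exact this.congr_deriv (by ring)
  have hconv : ConvexOn ℝ Set.univ q := by
    apply convexOn_univ_of_deriv2_nonneg (fun s => (hd1 s).differentiableAt)
      (fun s => (hd2 s).differentiableAt)
    intro s
    have : deriv (deriv q) s = -c₁ * Real.cos (s + φ) + c₂ * -Real.sin (s + φ) + R := (hd2 s).deriv
    rw [Function.iterate_succ, Function.iterate_one, Function.comp_apply, this]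
    have h1 : -c₁ * Real.cos (s + φ) ≥ -|c₁| := by
      have := Real.neg_one_le_cos (s + φ)
      have := Real.cos_le_one (s + φ)
      rcases abs_cases c₁ with ⟨h, _⟩ | ⟨h, _⟩ <;> nlinarith
    have h2 : c₂ * -Real.sin (s + φ) ≥ -|c₂| := by
      have := Real.neg_one_le_sin (s + φ)
      have := Real.sin_le_one (s + φ)
      rcases abs_cases c₂ with ⟨h, _⟩ | ⟨h, _⟩ <;> nlinarith
    simp only [hR]; linarith
  have key := hconv.2 (Set.mem_univ a) (Set.mem_univ b) ht0 (by linarith : (0:ℝ) ≤ 1 - t) (by ring)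
  simp only [smul_eq_mul, hq] at key
  have hid : t * a ^ 2 + (1 - t) * b ^ 2 - (t * a + (1 - t) * b) ^ 2 = t * (1 - t) * (a - b) ^ 2 := by
    ring
  have hRnn : 0 ≤ R := by positivity
  nlinarith [key, hid]



noncomputable def complexify (k : SchwartzMap (EuclideanSpace ℝ (Fin n)) ℝ) :
    SchwartzMap (EuclideanSpace ℝ (Fin n)) ℂ where
  toFun x := (k x : ℂ)
  smooth' := Complex.ofRealCLM.contDiff.comp k.smooth'
  decay' := by
    intro kk nn
    obtain ⟨C, hC⟩ := k.decay' kk nn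
    refine ⟨C, fun x => ?_⟩
    have heq : ‖iteratedFDeriv ℝ nn (fun x => ((k x : ℝ) : ℂ)) x‖
        = ‖iteratedFDeriv ℝ nn k x‖ := by
      have h2 := LinearIsometry.norm_iteratedFDeriv_comp_left
        (RCLike.ofRealLI (K := ℂ)) (k.smooth'.contDiffAt (x := x)) (i := nn) (by exact_mod_cast le_top)
      exact h2
    rw [heq]; exact hC x

lemma integrable_char_mul (k : SchwartzMap (EuclideanSpace ℝ (Fin n)) ℝ)
    (w : EuclideanSpace ℝ (Fin n)) :
    Integrable (fun v : EuclideanSpace ℝ (Fin n) =>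
      Complex.exp ((↑(-2 * π * ⟪v, w⟫) * Complex.I)) • ((k v : ℂ))) := by
  apply Integrable.bdd_mul (c := 1) ((complexify k).integrable)
  · apply Continuous.aestronglyMeasurable
    exact Complex.continuous_exp.comp ((Complex.continuous_ofReal.comp
      (continuous_const.mul (continuous_id.inner continuous_const))).mul continuous_const)
  · exact Filter.Eventually.of_forall fun x => by rw [Complex.norm_exp_ofReal_mul_I]

lemma fourier_re (k : SchwartzMap (EuclideanSpace ℝ (Fin n)) ℝ) (w : EuclideanSpace ℝ (Fin n)) :
    (𝓕 (fun v : EuclideanSpace ℝ (Fin n) => (k v : ℂ)) w).re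
      = ∫ y : EuclideanSpace ℝ (Fin n), Real.cos (2 * π * ⟪y, w⟫) * k y := by
  rw [Real.fourier_eq']
  have h := integral_re (integrable_char_mul k w)
  simp only [RCLike.re_to_complex] at h
  rw [← h]
  congr 1
  ext y
  simp only [smul_eq_mul, Complex.mul_re, Complex.ofReal_re, Complex.ofReal_im,
    Complex.exp_ofReal_mul_I_re, Complex.exp_ofReal_mul_I_im, mul_zero, sub_zero]
  rw [show (-2 * π * ⟪y, w⟫) = -(2 * π * ⟪y, w⟫) by ring, Real.cos_neg]

lemma fourier_im (k : SchwartzMap (EuclideanSpace ℝ (Fin n)) ℝ) (w : EuclideanSpace ℝ (Fin n)) :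
    (𝓕 (fun v : EuclideanSpace ℝ (Fin n) => (k v : ℂ)) w).im
      = - ∫ y : EuclideanSpace ℝ (Fin n), Real.sin (2 * π * ⟪y, w⟫) * k y := by
  rw [Real.fourier_eq']
  have h := integral_im (integrable_char_mul k w)
  simp only [RCLike.im_to_complex] at h
  rw [← h, ← integral_neg]
  congr 1
  ext y
  simp only [smul_eq_mul, Complex.mul_im, Complex.ofReal_re, Complex.ofReal_im,
    Complex.exp_ofReal_mul_I_re, Complex.exp_ofReal_mul_I_im, mul_zero, add_zero]
  rw [show (-2 * π * ⟪y, w⟫) = -(2 * π * ⟪y, w⟫) by ring, Real.sin_neg]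
  ring



lemma fourier_decay (k : SchwartzMap (EuclideanSpace ℝ (Fin n)) ℝ) :
    ∃ C₃ : ℝ, 0 ≤ C₃ ∧ ∀ w : EuclideanSpace ℝ (Fin n),
      ‖w‖ ^ 3 * ‖𝓕 (fun v : EuclideanSpace ℝ (Fin n) => (k v : ℂ)) w‖ ≤ C₃ := by
  obtain ⟨C, hC⟩ := (SchwartzMap.fourierTransformCLM ℝ (complexify k)).decay' 3 0
  have key : ∀ w : EuclideanSpace ℝ (Fin n),
      ‖w‖ ^ 3 * ‖𝓕 (fun v : EuclideanSpace ℝ (Fin n) => (k v : ℂ)) w‖ ≤ C := by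
    intro w
    have := hC w
    rw [norm_iteratedFDeriv_zero] at this
    exact this
  refine ⟨C, le_trans (by simp) (key 0), key⟩

lemma relax_change (σ : ℝ) (hσ : 0 < σ) (θ : EuclideanSpace ℝ (Fin n))
    (f : EuclideanSpace ℝ (Fin n) → ℝ) (k : SchwartzMap (EuclideanSpace ℝ (Fin n)) ℝ) :
    (∫ x, f x * ((σ ^ n)⁻¹ * k (σ⁻¹ • (x - θ))))
      = ∫ y, f (θ + σ • y) * k y := by
  have h1 : (∫ x, f x * ((σ ^ n)⁻¹ * k (σ⁻¹ • (x - θ))))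
      = ∫ x, f (θ + x) * ((σ ^ n)⁻¹ * k (σ⁻¹ • x)) := by
    rw [← integral_add_left_eq_self
      (fun x => f x * ((σ ^ n)⁻¹ * k (σ⁻¹ • (x - θ)))) θ]
    simp
  rw [h1]
  have h2 : (∫ x, f (θ + x) * ((σ ^ n)⁻¹ * k (σ⁻¹ • x)))
      = ∫ x, (σ ^ n : ℝ)⁻¹ • ((fun y => f (θ + σ • y) * k y) (σ⁻¹ • x)) := by
    congr 1; ext x
    have : σ • σ⁻¹ • x = x := by
      rw [smul_smul, mul_inv_cancel₀ hσ.ne', one_smul]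
    simp [this, smul_eq_mul]
    ring
  rw [h2, integral_smul, MeasureTheory.Measure.integral_comp_inv_smul_of_nonneg volume
    (fun y => f (θ + σ • y) * k y) hσ.le]
  rw [finrank_euclideanSpace_fin]
  rw [smul_smul, inv_mul_cancel₀ (by positivity), one_smul]



lemma integrable_bdd_mul (k : SchwartzMap (EuclideanSpace ℝ (Fin n)) ℝ)
    (f : EuclideanSpace ℝ (Fin n) → ℝ) (hf : Continuous f) (B : ℝ) (hB : ∀ y, |f y| ≤ B) :
    Integrable fun y => f y * k y :=
  Integrable.bdd_mul (c := B) k.integrable hf.aestronglyMeasurable (Filter.Eventually.of_forall fun y => by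
    rw [Real.norm_eq_abs]; exact hB y)

lemma integrable_poly_mul (k : SchwartzMap (EuclideanSpace ℝ (Fin n)) ℝ)
    (f : EuclideanSpace ℝ (Fin n) → ℝ) (hf : Continuous f) (C : ℝ) (p : ℕ)
    (hb : ∀ y, |f y| ≤ C * (1 + ‖y‖) ^ p) :
    Integrable fun y => f y * k y := by
  have hIpoly : Integrable (fun y : EuclideanSpace ℝ (Fin n) => (1 + ‖y‖) ^ p * ‖k y‖) := by
    have heq : (fun y : EuclideanSpace ℝ (Fin n) => (1 + ‖y‖) ^ p * ‖k y‖)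
        = fun y => ∑ i ∈ Finset.range (p + 1),
            (p.choose i : ℝ) * (‖y‖ ^ (p - i) * ‖k y‖) := by
      funext y
      rw [add_pow, Finset.sum_mul]
      refine Finset.sum_congr rfl fun i _ => by ring
    rw [heq]
    exact integrable_finset_sum _ fun i _ => (k.integrable_pow_mul volume (p - i)).const_mul _
  refine Integrable.mono' (hIpoly.const_mul C) ?_ ?_
  · exact (hf.mul k.continuous).aestronglyMeasurable
  · filter_upwards with y
    rw [Real.norm_eq_abs, abs_mul]
    calc |f y| * |k y| ≤ (C * (1 + ‖y‖) ^ p) * ‖k y‖ := by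
          apply mul_le_mul_of_nonneg_right (hb y) (abs_nonneg _)
      _ = C * ((1 + ‖y‖) ^ p * ‖k y‖) := by ring

set_option maxHeartbeats 1000000 in
/-- Deterministic cosine disturbance: Let `f = r + g` where `r` is
`m`-strongly convex and polynomially bounded, and
`g(x) = Σ_j a_j cos(⟪ξ_j, x⟫ + ψ_j)` with `Σ_j |a_j| < ∞` and `‖ξ_j‖ ≥ ε > 0`. For every
nonnegative Schwartz density `k` and every `m* < m`, the scaled relaxations of `f` are
`m*`-strongly convex for all sufficiently large scales `σ`. -/
theorem deterministic_cosine_disturbance (n : ℕ)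
    (r : EuclideanSpace ℝ (Fin n) → ℝ)
    (m : ℝ) (hm : 0 < m)
    (hconv : ∀ v w : EuclideanSpace ℝ (Fin n), ∀ t ∈ Set.Icc (0 : ℝ) 1,
      r (t • v + (1 - t) • w)
        ≤ t * r v + (1 - t) * r w - 1 / 2 * m * t * (1 - t) * ‖v - w‖ ^ 2)
    (C : ℝ) (hC : 0 ≤ C) (p : ℕ) (hrbound : ∀ x, |r x| ≤ C * (1 + ‖x‖) ^ p)
    (a : ℕ → ℝ) (ha : Summable fun j => |a j|)
    (ξ : ℕ → EuclideanSpace ℝ (Fin n)) (ψ : ℕ → ℝ)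
    (ε : ℝ) (hε : 0 < ε) (hξ : ∀ j, ε ≤ ‖ξ j‖)
    (k : SchwartzMap (EuclideanSpace ℝ (Fin n)) ℝ)
    (hknn : ∀ x, 0 ≤ k x) (hk1 : ∫ x, k x = 1)
    (mstar : ℝ) (hmstar : mstar < m) :
    ∃ σstar > (0 : ℝ), ∀ σ > σstar,
      ∀ v w : EuclideanSpace ℝ (Fin n), ∀ t ∈ Set.Icc (0 : ℝ) 1,
        (∫ x, (r x + ∑' j, a j * Real.cos (⟪ξ j, x⟫ + ψ j)) *
            ((σ ^ n)⁻¹ * k (σ⁻¹ • (x - (t • v + (1 - t) • w)))))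
          ≤ t * (∫ x, (r x + ∑' j, a j * Real.cos (⟪ξ j, x⟫ + ψ j)) *
                ((σ ^ n)⁻¹ * k (σ⁻¹ • (x - v))))
            + (1 - t) * (∫ x, (r x + ∑' j, a j * Real.cos (⟪ξ j, x⟫ + ψ j)) *
                ((σ ^ n)⁻¹ * k (σ⁻¹ • (x - w))))
            - 1 / 2 * mstar * t * (1 - t) * ‖v - w‖ ^ 2 := by
  classical
  obtain ⟨C₃, hC₃0, hC₃⟩ := fourier_decay k
  set S : ℝ := ∑' j, |a j| with hSdef
  have hS0 : 0 ≤ S := tsum_nonneg fun j => abs_nonneg _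
  have haj : ∀ j, |a j| ≤ S := fun j => ha.le_tsum j fun i _ => abs_nonneg _
  have hmm : 0 < m - mstar := by linarith
  set Q : ℝ := 2 * (C₃ * (2 * π) ^ 3) / ε with hQdef
  have hQ0 : 0 ≤ Q := by positivity
  refine ⟨max 1 (S * Q / (m - mstar)), lt_of_lt_of_le one_pos (le_max_left _ _), ?_⟩
  intro σ hσ v w t ht
  obtain ⟨ht0, ht1⟩ := ht
  have hσ1 : 1 < σ := lt_of_le_of_lt (le_max_left _ _) hσ
  have hσ0 : 0 < σ := lt_trans one_pos hσ1
  have ht10 : 0 ≤ 1 - t := by linarith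
  have hc0 : 0 ≤ t * (1 - t) * ‖v - w‖ ^ 2 := by positivity
  have hkey : S * Q / σ ^ 3 ≤ m - mstar := by
    have h2 : S * Q / (m - mstar) < σ := lt_of_le_of_lt (le_max_right _ _) hσ
    have h3 : S * Q < σ * (m - mstar) := by
      rw [div_lt_iff₀ hmm] at h2; linarith
    have h4 : σ ≤ σ ^ 3 := by
      nlinarith [mul_nonneg (mul_nonneg hσ0.le (by linarith : (0:ℝ) ≤ σ - 1))
        (by linarith : (0:ℝ) ≤ σ + 1)]
    rw [div_le_iff₀ (by positivity)]
    nlinarith [mul_le_mul_of_nonneg_left h4 (le_of_lt hmm)]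
  -- continuity of r and g
  have hrconv : ConvexOn ℝ Set.univ r := by
    refine ⟨convex_univ, ?_⟩
    intro x _ y _ s u hs hu hsu
    have h := hconv x y s ⟨hs, by linarith⟩
    have h1u : 1 - s = u := by linarith
    rw [h1u] at h
    have hnn : 0 ≤ 1 / 2 * m * s * u * ‖x - y‖ ^ 2 := by positivity
    simp only [smul_eq_mul]
    linarith
  have hrc : Continuous r := by
    rw [← continuousOn_univ]
    exact ConvexOn.continuousOn isOpen_univ hrconv
  have hgcont : Continuous fun x : EuclideanSpace ℝ (Fin n) =>
      ∑' j, a j * Real.cos (⟪ξ j, x⟫ + ψ j) := by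
    apply continuous_tsum ?_ ha ?_
    · intro j
      exact continuous_const.mul (Real.continuous_cos.comp
        ((continuous_const.inner continuous_id).add continuous_const))
    · intro j x
      rw [Real.norm_eq_abs, abs_mul]
      calc |a j| * |Real.cos (⟪ξ j, x⟫ + ψ j)| ≤ |a j| * 1 :=
            mul_le_mul_of_nonneg_left (Real.abs_cos_le_one _) (abs_nonneg _)
        _ = |a j| := mul_one _
  have hgb : ∀ x : EuclideanSpace ℝ (Fin n),
      |∑' j, a j * Real.cos (⟪ξ j, x⟫ + ψ j)| ≤ S := by
    intro x
    calc |∑' j, a j * Real.cos (⟪ξ j, x⟫ + ψ j)|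
        ≤ ∑' j, ‖a j * Real.cos (⟪ξ j, x⟫ + ψ j)‖ := by
          rw [← Real.norm_eq_abs]
          apply norm_tsum_le_tsum_norm
          apply Summable.of_nonneg_of_le (fun j => norm_nonneg _) ?_ ha
          intro j
          rw [Real.norm_eq_abs, abs_mul]
          calc |a j| * |Real.cos (⟪ξ j, x⟫ + ψ j)| ≤ |a j| * 1 :=
                mul_le_mul_of_nonneg_left (Real.abs_cos_le_one _) (abs_nonneg _)
            _ = |a j| := mul_one _
      _ ≤ ∑' j, |a j| := by
          apply Summable.tsum_le_tsum ?_ ?_ ha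
          · intro j
            rw [Real.norm_eq_abs, abs_mul]
            calc |a j| * |Real.cos (⟪ξ j, x⟫ + ψ j)| ≤ |a j| * 1 :=
                  mul_le_mul_of_nonneg_left (Real.abs_cos_le_one _) (abs_nonneg _)
              _ = |a j| := mul_one _
          · apply Summable.of_nonneg_of_le (fun j => norm_nonneg _) ?_ ha
            intro j
            rw [Real.norm_eq_abs, abs_mul]
            calc |a j| * |Real.cos (⟪ξ j, x⟫ + ψ j)| ≤ |a j| * 1 :=
                  mul_le_mul_of_nonneg_left (Real.abs_cos_le_one _) (abs_nonneg _)
              _ = |a j| := mul_one _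
  -- integrabilities
  have hIr : ∀ θ : EuclideanSpace ℝ (Fin n),
      Integrable fun y => r (θ + σ • y) * k y := by
    intro θ
    apply integrable_poly_mul k _ (hrc.comp (continuous_const.add
      (continuous_id.const_smul σ))) (C * (1 + ‖θ‖ + σ) ^ p) p
    intro y
    have h1 : ‖θ + σ • y‖ ≤ ‖θ‖ + σ * ‖y‖ := by
      refine (norm_add_le _ _).trans ?_
      rw [norm_smul, Real.norm_eq_abs, abs_of_pos hσ0]
    have h2 : 1 + ‖θ + σ • y‖ ≤ (1 + ‖θ‖ + σ) * (1 + ‖y‖) := by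
      nlinarith [norm_nonneg y, norm_nonneg θ]
    calc |r (θ + σ • y)| ≤ C * (1 + ‖θ + σ • y‖) ^ p := hrbound _
      _ ≤ C * ((1 + ‖θ‖ + σ) * (1 + ‖y‖)) ^ p :=
          mul_le_mul_of_nonneg_left (pow_le_pow_left₀ (by positivity) h2 p) hC
      _ = C * (1 + ‖θ‖ + σ) ^ p * (1 + ‖y‖) ^ p := by rw [mul_pow]; ring
  have hIg : ∀ θ : EuclideanSpace ℝ (Fin n),
      Integrable fun y => (∑' j, a j * Real.cos (⟪ξ j, θ + σ • y⟫ + ψ j)) * k y := by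
    intro θ
    apply integrable_bdd_mul k _ (hgcont.comp (continuous_const.add
      (continuous_id.const_smul σ))) S
    intro y
    exact hgb (θ + σ • y)
  have hIT : ∀ (j : ℕ) (θ : EuclideanSpace ℝ (Fin n)),
      Integrable fun y => (a j * Real.cos (⟪ξ j, θ + σ • y⟫ + ψ j)) * k y := by
    intro j θ
    apply integrable_bdd_mul k (fun y => a j * Real.cos (⟪ξ j, θ + σ • y⟫ + ψ j))
      (continuous_const.mul (Real.continuous_cos.comp
      (((continuous_const.inner (continuous_const.add (continuous_id.const_smul σ)))).add
        continuous_const))) |a j|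
    intro y
    rw [abs_mul]
    calc |a j| * |Real.cos (⟪ξ j, θ + σ • y⟫ + ψ j)| ≤ |a j| * 1 :=
          mul_le_mul_of_nonneg_left (Real.abs_cos_le_one _) (abs_nonneg _)
      _ = |a j| := mul_one _
  have hIcos : ∀ j : ℕ, Integrable fun y : EuclideanSpace ℝ (Fin n) =>
      Real.cos (σ * ⟪ξ j, y⟫) * k y := by
    intro j
    apply integrable_bdd_mul k _ (Real.continuous_cos.comp
      (continuous_const.mul (continuous_const.inner continuous_id))) 1
    intro y; exact Real.abs_cos_le_one _
  have hIsin : ∀ j : ℕ, Integrable fun y : EuclideanSpace ℝ (Fin n) =>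
      Real.sin (σ * ⟪ξ j, y⟫) * k y := by
    intro j
    apply integrable_bdd_mul k _ (Real.continuous_sin.comp
      (continuous_const.mul (continuous_const.inner continuous_id))) 1
    intro y; exact Real.abs_sin_le_one _
  -- amplitudes
  set A : ℕ → ℝ := fun j => ∫ y : EuclideanSpace ℝ (Fin n), Real.cos (σ * ⟪ξ j, y⟫) * k y
    with hAdef
  set B : ℕ → ℝ := fun j => ∫ y : EuclideanSpace ℝ (Fin n), Real.sin (σ * ⟪ξ j, y⟫) * k y
    with hBdef
  have hwnorm : ∀ j, ‖((σ / (2 * π)) • ξ j : EuclideanSpace ℝ (Fin n))‖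
      = (σ / (2 * π)) * ‖ξ j‖ := by
    intro j
    rw [norm_smul, Real.norm_eq_abs, abs_of_pos (by positivity)]
  have hwpos : ∀ j, 0 < (σ / (2 * π)) * ‖ξ j‖ := by
    intro j
    have : 0 < ‖ξ j‖ := lt_of_lt_of_le hε (hξ j)
    positivity
  have hinner2pi : ∀ (j : ℕ) (y : EuclideanSpace ℝ (Fin n)),
      2 * π * ⟪y, (σ / (2 * π)) • ξ j⟫ = σ * ⟪ξ j, y⟫ := by
    intro j y
    rw [real_inner_smul_right, real_inner_comm]
    field_simp
  have hFnorm : ∀ j, ‖𝓕 (fun v : EuclideanSpace ℝ (Fin n) => (k v : ℂ))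
      ((σ / (2 * π)) • ξ j)‖ ≤ C₃ / ((σ / (2 * π)) * ‖ξ j‖) ^ 3 := by
    intro j
    have h := hC₃ ((σ / (2 * π)) • ξ j)
    rw [hwnorm j] at h
    rw [le_div_iff₀ (pow_pos (hwpos j) 3)]
    linarith [h]
  have hAbound : ∀ j, |A j| ≤ C₃ / ((σ / (2 * π)) * ‖ξ j‖) ^ 3 := by
    intro j
    have heqA : A j = (𝓕 (fun v : EuclideanSpace ℝ (Fin n) => (k v : ℂ))
        ((σ / (2 * π)) • ξ j)).re := by
      have hfun : (fun y : EuclideanSpace ℝ (Fin n) =>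
          Real.cos (2 * π * ⟪y, (σ / (2 * π)) • ξ j⟫) * k y)
          = fun y => Real.cos (σ * ⟪ξ j, y⟫) * k y :=
        funext fun y => by rw [hinner2pi j y]
      simp only [hAdef]
      rw [fourier_re, hfun]
    rw [heqA]
    exact le_trans (Complex.abs_re_le_norm _) (hFnorm j)
  have hBbound : ∀ j, |B j| ≤ C₃ / ((σ / (2 * π)) * ‖ξ j‖) ^ 3 := by
    intro j
    have heqB : B j = -(𝓕 (fun v : EuclideanSpace ℝ (Fin n) => (k v : ℂ))
        ((σ / (2 * π)) • ξ j)).im := by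
      have hfun : (fun y : EuclideanSpace ℝ (Fin n) =>
          Real.sin (2 * π * ⟪y, (σ / (2 * π)) • ξ j⟫) * k y)
          = fun y => Real.sin (σ * ⟪ξ j, y⟫) * k y :=
        funext fun y => by rw [hinner2pi j y]
      simp only [hBdef]
      rw [fourier_im, hfun, neg_neg]
    rw [heqB, abs_neg]
    exact le_trans (Complex.abs_im_le_norm _) (hFnorm j)
  have hDj : ∀ j, (|A j| + |B j|) * ‖ξ j‖ ^ 2 ≤ Q / σ ^ 3 := by
    intro j
    have hξ0 : 0 < ‖ξ j‖ := lt_of_lt_of_le hε (hξ j)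
    have hexp : C₃ / ((σ / (2 * π)) * ‖ξ j‖) ^ 3 * ‖ξ j‖ ^ 2
        = C₃ * (2 * π) ^ 3 / (σ ^ 3 * ‖ξ j‖) := by
      have hπ := Real.pi_pos
      field_simp
    have hmono : C₃ * (2 * π) ^ 3 / (σ ^ 3 * ‖ξ j‖) ≤ C₃ * (2 * π) ^ 3 / (σ ^ 3 * ε) := by
      gcongr
      exact hξ j
    have hQeq : Q / σ ^ 3 = 2 * (C₃ * (2 * π) ^ 3 / (σ ^ 3 * ε)) := by
      rw [hQdef, div_div, mul_div_assoc, mul_comm ε (σ ^ 3)]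
    calc (|A j| + |B j|) * ‖ξ j‖ ^ 2
        ≤ (C₃ / ((σ / (2 * π)) * ‖ξ j‖) ^ 3 + C₃ / ((σ / (2 * π)) * ‖ξ j‖) ^ 3) * ‖ξ j‖ ^ 2 := by
          apply mul_le_mul_of_nonneg_right (add_le_add (hAbound j) (hBbound j)) (by positivity)
      _ = 2 * (C₃ / ((σ / (2 * π)) * ‖ξ j‖) ^ 3 * ‖ξ j‖ ^ 2) := by ring
      _ = 2 * (C₃ * (2 * π) ^ 3 / (σ ^ 3 * ‖ξ j‖)) := by rw [hexp]
      _ ≤ 2 * (C₃ * (2 * π) ^ 3 / (σ ^ 3 * ε)) := by linarith [hmono]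
      _ = Q / σ ^ 3 := hQeq.symm
  -- the relaxed cosine terms
  set T : ℕ → EuclideanSpace ℝ (Fin n) → ℝ := fun j θ =>
    ∫ y, (a j * Real.cos (⟪ξ j, θ + σ • y⟫ + ψ j)) * k y with hTdef
  have hT : ∀ (j : ℕ) (θ : EuclideanSpace ℝ (Fin n)),
      T j θ = (a j * A j) * Real.cos (⟪ξ j, θ⟫ + ψ j)
        + (-(a j * B j)) * Real.sin (⟪ξ j, θ⟫ + ψ j) := by
    intro j θ
    have hint : ∀ y : EuclideanSpace ℝ (Fin n),
        (a j * Real.cos (⟪ξ j, θ + σ • y⟫ + ψ j)) * k y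
        = (a j * Real.cos (⟪ξ j, θ⟫ + ψ j)) * (Real.cos (σ * ⟪ξ j, y⟫) * k y)
          - (a j * Real.sin (⟪ξ j, θ⟫ + ψ j)) * (Real.sin (σ * ⟪ξ j, y⟫) * k y) := by
      intro y
      rw [inner_add_right, real_inner_smul_right]
      rw [show ⟪ξ j, θ⟫ + σ * ⟪ξ j, y⟫ + ψ j = (⟪ξ j, θ⟫ + ψ j) + σ * ⟪ξ j, y⟫ by ring,
        Real.cos_add]
      ring
    simp only [hTdef]
    rw [show (fun y => (a j * Real.cos (⟪ξ j, θ + σ • y⟫ + ψ j)) * k y)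
        = fun y => (a j * Real.cos (⟪ξ j, θ⟫ + ψ j)) * (Real.cos (σ * ⟪ξ j, y⟫) * k y)
          - (a j * Real.sin (⟪ξ j, θ⟫ + ψ j)) * (Real.sin (σ * ⟪ξ j, y⟫) * k y)
      from funext hint]
    rw [integral_sub ((hIcos j).const_mul _) ((hIsin j).const_mul _),
      integral_const_mul, integral_const_mul]
    simp only [hAdef, hBdef]
    ring
  have hTabs : ∀ (j : ℕ) (θ : EuclideanSpace ℝ (Fin n)), |T j θ| ≤ |a j| := by
    intro j θ
    simp only [hTdef]
    rw [← Real.norm_eq_abs]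
    calc ‖∫ y, (a j * Real.cos (⟪ξ j, θ + σ • y⟫ + ψ j)) * k y‖
        ≤ ∫ y, ‖(a j * Real.cos (⟪ξ j, θ + σ • y⟫ + ψ j)) * k y‖ :=
          norm_integral_le_integral_norm _
      _ ≤ ∫ y, |a j| * k y := by
          apply integral_mono (hIT j θ).norm (k.integrable.const_mul _)
          intro y
          dsimp only
          rw [Real.norm_eq_abs, abs_mul, abs_mul]
          have h1 : |a j| * |Real.cos (⟪ξ j, θ + σ • y⟫ + ψ j)| ≤ |a j| :=
            (mul_le_mul_of_nonneg_left (Real.abs_cos_le_one _) (abs_nonneg _)).trans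
              (le_of_eq (mul_one _))
          have h2 : |(k y : ℝ)| = k y := abs_of_nonneg (hknn y)
          rw [h2]
          exact mul_le_mul_of_nonneg_right h1 (hknn y)
      _ = |a j| := by rw [integral_const_mul, hk1, mul_one]
  have hTsummable : ∀ θ : EuclideanSpace ℝ (Fin n), Summable fun j => T j θ := by
    intro θ
    refine Summable.of_norm_bounded ha fun j => ?_
    rw [Real.norm_eq_abs]
    exact hTabs j θ
  have hGsum : ∀ θ : EuclideanSpace ℝ (Fin n),
      (∫ y, (∑' j, a j * Real.cos (⟪ξ j, θ + σ • y⟫ + ψ j)) * k y) = ∑' j, T j θ := by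
    intro θ
    rw [show (fun y => (∑' j, a j * Real.cos (⟪ξ j, θ + σ • y⟫ + ψ j)) * k y)
        = fun y => ∑' j, (a j * Real.cos (⟪ξ j, θ + σ • y⟫ + ψ j)) * k y
      from funext fun y => (tsum_mul_right).symm]
    simp only [hTdef]
    refine (integral_tsum_of_summable_integral_norm (fun j => hIT j θ) ?_).symm
    apply Summable.of_nonneg_of_le
      (fun j => integral_nonneg fun y => norm_nonneg _) ?_ ha
    intro j
    calc (∫ y, ‖(a j * Real.cos (⟪ξ j, θ + σ • y⟫ + ψ j)) * k y‖)
        ≤ ∫ y, |a j| * k y := by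
          apply integral_mono (hIT j θ).norm (k.integrable.const_mul _)
          intro y
          dsimp only
          rw [Real.norm_eq_abs, abs_mul, abs_mul, abs_of_nonneg (hknn y)]
          exact mul_le_mul_of_nonneg_right
            ((mul_le_mul_of_nonneg_left (Real.abs_cos_le_one _) (abs_nonneg _)).trans
              (le_of_eq (mul_one _))) (hknn y)
      _ = |a j| := by rw [integral_const_mul, hk1, mul_one]
  -- per-term strong convexity deficit
  set θ₀ : EuclideanSpace ℝ (Fin n) := t • v + (1 - t) • w with hθ₀def
  have hinner₀ : ∀ j, ⟪ξ j, θ₀⟫ = t * ⟪ξ j, v⟫ + (1 - t) * ⟪ξ j, w⟫ := by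
    intro j
    rw [hθ₀def, inner_add_right, real_inner_smul_right, real_inner_smul_right]
  have hTj : ∀ j, T j θ₀ ≤ t * T j v + (1 - t) * T j w
      + |a j| * (Q / σ ^ 3 * (1 / 2 * (t * (1 - t) * ‖v - w‖ ^ 2))) := by
    intro j
    rw [hT j θ₀, hT j v, hT j w, hinner₀ j]
    have haux := aux_cos_sin_deficit (a j * A j) (-(a j * B j)) (ψ j)
      (⟪ξ j, v⟫) (⟪ξ j, w⟫) t ht0 ht1
    have hsq : (⟪ξ j, v⟫ - ⟪ξ j, w⟫) ^ 2 ≤ ‖ξ j‖ ^ 2 * ‖v - w‖ ^ 2 := by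
      rw [← inner_sub_right]
      have hCS := abs_real_inner_le_norm (ξ j) (v - w)
      nlinarith [sq_abs (⟪ξ j, v - w⟫ : ℝ), abs_nonneg (⟪ξ j, v - w⟫ : ℝ),
        norm_nonneg (ξ j), norm_nonneg (v - w)]
    have hα : |a j * A j| + |(-(a j * B j))| = |a j| * (|A j| + |B j|) := by
      rw [abs_neg, abs_mul, abs_mul]; ring
    have hbd : 1 / 2 * (|a j * A j| + |(-(a j * B j))|)
          * (t * (1 - t) * (⟪ξ j, v⟫ - ⟪ξ j, w⟫) ^ 2)
        ≤ |a j| * (Q / σ ^ 3 * (1 / 2 * (t * (1 - t) * ‖v - w‖ ^ 2))) := by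
      calc 1 / 2 * (|a j * A j| + |(-(a j * B j))|)
            * (t * (1 - t) * (⟪ξ j, v⟫ - ⟪ξ j, w⟫) ^ 2)
          ≤ 1 / 2 * (|a j * A j| + |(-(a j * B j))|)
            * (t * (1 - t) * (‖ξ j‖ ^ 2 * ‖v - w‖ ^ 2)) := by
            apply mul_le_mul_of_nonneg_left
              (mul_le_mul_of_nonneg_left hsq (by nlinarith)) (by positivity)
        _ = 1 / 2 * (|a j| * ((|A j| + |B j|) * ‖ξ j‖ ^ 2))
            * (‖v - w‖ ^ 2 * (t * (1 - t))) := by rw [hα]; ring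
        _ ≤ 1 / 2 * (|a j| * (Q / σ ^ 3)) * (‖v - w‖ ^ 2 * (t * (1 - t))) := by
            apply mul_le_mul_of_nonneg_right
              (mul_le_mul_of_nonneg_left
                (mul_le_mul_of_nonneg_left (hDj j) (abs_nonneg _)) (by norm_num))
              (by nlinarith)
        _ = |a j| * (Q / σ ^ 3 * (1 / 2 * (t * (1 - t) * ‖v - w‖ ^ 2))) := by ring
    linarith [haux, hbd]
  -- assemble the g-part inequality
  have hsum2 : Summable fun j => t * T j v + (1 - t) * T j w
      + |a j| * (Q / σ ^ 3 * (1 / 2 * (t * (1 - t) * ‖v - w‖ ^ 2))) :=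
    (((hTsummable v).mul_left t).add ((hTsummable w).mul_left (1 - t))).add (ha.mul_right _)
  have hG : (∑' j, T j θ₀) ≤ t * (∑' j, T j v) + (1 - t) * (∑' j, T j w)
      + 1 / 2 * (m - mstar) * (t * (1 - t) * ‖v - w‖ ^ 2) := by
    have h1 : (∑' j, T j θ₀) ≤ ∑' j, (t * T j v + (1 - t) * T j w
        + |a j| * (Q / σ ^ 3 * (1 / 2 * (t * (1 - t) * ‖v - w‖ ^ 2)))) :=
      Summable.tsum_le_tsum hTj (hTsummable θ₀) hsum2
    have h2 : (∑' j, (t * T j v + (1 - t) * T j w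
        + |a j| * (Q / σ ^ 3 * (1 / 2 * (t * (1 - t) * ‖v - w‖ ^ 2)))))
        = t * (∑' j, T j v) + (1 - t) * (∑' j, T j w)
          + S * (Q / σ ^ 3 * (1 / 2 * (t * (1 - t) * ‖v - w‖ ^ 2))) := by
      rw [Summable.tsum_add (((hTsummable v).mul_left t).add ((hTsummable w).mul_left (1 - t)))
        (ha.mul_right _),
        Summable.tsum_add ((hTsummable v).mul_left t) ((hTsummable w).mul_left (1 - t)),
        tsum_mul_left, tsum_mul_left, tsum_mul_right, hSdef]
    have h3 : S * (Q / σ ^ 3 * (1 / 2 * (t * (1 - t) * ‖v - w‖ ^ 2)))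
        ≤ 1 / 2 * (m - mstar) * (t * (1 - t) * ‖v - w‖ ^ 2) := by
      have hmul := mul_le_mul_of_nonneg_right hkey (by positivity :
        (0:ℝ) ≤ 1 / 2 * (t * (1 - t) * ‖v - w‖ ^ 2))
      calc S * (Q / σ ^ 3 * (1 / 2 * (t * (1 - t) * ‖v - w‖ ^ 2)))
          = S * Q / σ ^ 3 * (1 / 2 * (t * (1 - t) * ‖v - w‖ ^ 2)) := by ring
        _ ≤ (m - mstar) * (1 / 2 * (t * (1 - t) * ‖v - w‖ ^ 2)) := hmul
        _ = 1 / 2 * (m - mstar) * (t * (1 - t) * ‖v - w‖ ^ 2) := by ring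
    linarith [h1, h2.le, h2.ge, h3]
  -- assemble the r-part inequality
  have hR : (∫ y, r (θ₀ + σ • y) * k y)
      ≤ t * (∫ y, r (v + σ • y) * k y) + (1 - t) * (∫ y, r (w + σ • y) * k y)
        - 1 / 2 * m * (t * (1 - t) * ‖v - w‖ ^ 2) := by
    have hpt : ∀ y : EuclideanSpace ℝ (Fin n),
        r (θ₀ + σ • y) * k y
        ≤ t * (r (v + σ • y) * k y) + ((1 - t) * (r (w + σ • y) * k y)
          - (1 / 2 * m * t * (1 - t) * ‖v - w‖ ^ 2) * k y) := by
      intro y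
      have hco : θ₀ + σ • y = t • (v + σ • y) + (1 - t) • (w + σ • y) := by
        rw [hθ₀def]; module
      have hnorm : ‖(v + σ • y) - (w + σ • y)‖ = ‖v - w‖ := by
        simp [add_sub_add_right_eq_sub]
      have h := hconv (v + σ • y) (w + σ • y) t ⟨ht0, ht1⟩
      rw [← hco, hnorm] at h
      have := mul_le_mul_of_nonneg_right h (hknn y)
      calc r (θ₀ + σ • y) * k y
          ≤ (t * r (v + σ • y) + (1 - t) * r (w + σ • y)
            - 1 / 2 * m * t * (1 - t) * ‖v - w‖ ^ 2) * k y := this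
        _ = t * (r (v + σ • y) * k y) + ((1 - t) * (r (w + σ • y) * k y)
            - (1 / 2 * m * t * (1 - t) * ‖v - w‖ ^ 2) * k y) := by ring
    have hA1 : Integrable fun y : EuclideanSpace ℝ (Fin n) =>
        t * (r (v + σ • y) * k y) := (hIr v).const_mul t
    have hA2 : Integrable fun y : EuclideanSpace ℝ (Fin n) =>
        (1 - t) * (r (w + σ • y) * k y) := (hIr w).const_mul (1 - t)
    have hA3 : Integrable fun y : EuclideanSpace ℝ (Fin n) =>
        (1 / 2 * m * t * (1 - t) * ‖v - w‖ ^ 2) * k y :=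
      k.integrable.const_mul _
    have hA4 : Integrable fun y : EuclideanSpace ℝ (Fin n) =>
        (1 - t) * (r (w + σ • y) * k y)
          - (1 / 2 * m * t * (1 - t) * ‖v - w‖ ^ 2) * k y := hA2.sub hA3
    have hint : Integrable fun y : EuclideanSpace ℝ (Fin n) =>
        t * (r (v + σ • y) * k y) + ((1 - t) * (r (w + σ • y) * k y)
          - (1 / 2 * m * t * (1 - t) * ‖v - w‖ ^ 2) * k y) := hA1.add hA4
    calc (∫ y, r (θ₀ + σ • y) * k y)
        ≤ ∫ y, (t * (r (v + σ • y) * k y) + ((1 - t) * (r (w + σ • y) * k y)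
            - (1 / 2 * m * t * (1 - t) * ‖v - w‖ ^ 2) * k y)) :=
          integral_mono (hIr θ₀) hint hpt
      _ = t * (∫ y, r (v + σ • y) * k y) + ((1 - t) * (∫ y, r (w + σ • y) * k y)
            - (1 / 2 * m * t * (1 - t) * ‖v - w‖ ^ 2) * 1) := by
          rw [integral_add hA1 hA4, integral_sub hA2 hA3,
            integral_const_mul, integral_const_mul, integral_const_mul, hk1]
      _ = t * (∫ y, r (v + σ • y) * k y) + (1 - t) * (∫ y, r (w + σ • y) * k y)
            - 1 / 2 * m * (t * (1 - t) * ‖v - w‖ ^ 2) := by ring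
  -- split the three relaxed integrals
  have hsplit : ∀ θ : EuclideanSpace ℝ (Fin n),
      (∫ x, (r x + ∑' j, a j * Real.cos (⟪ξ j, x⟫ + ψ j)) *
          ((σ ^ n)⁻¹ * k (σ⁻¹ • (x - θ))))
        = (∫ y, r (θ + σ • y) * k y)
          + ∫ y, (∑' j, a j * Real.cos (⟪ξ j, θ + σ • y⟫ + ψ j)) * k y := by
    intro θ
    rw [relax_change σ hσ0 θ
      (fun x => r x + ∑' j, a j * Real.cos (⟪ξ j, x⟫ + ψ j)) k,
      ← integral_add (hIr θ) (hIg θ)]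
    congr 1
    funext y
    ring
  rw [hsplit, hsplit, hsplit, hGsum θ₀, hGsum v, hGsum w]
  linarith [hR, hG]
end
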